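/- arXiv:1311.0573 — 2 statements merged into one kernel-verified Lean document; each statement's English description precedes it below -/
import Mathlib

section
/- Let G be a 3-connected graph containing a separating set S with |S| = 3. Let X be a bridge of G|S that contains at least two vertices not in S. Suppose there are at least four edges joining vertices of S to vertices of X \ S, and suppose some vertex x ∈ S has at least two neighbours in X \ S. Then there exists a path P in the subgraph induced by X whose endpoints lie in S, whose internal vertices avoid S, and which does not meet x; and there exist two distinct vertices q1, q2 on P and two paths Q1 (from x to q1) and Q2 (from x to q2), contained in the induced subgraph on X, that meet each other only at x and contain no vertex of P other than q1 and q2 respectively. -/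
open SimpleGraph

universe u v

/-- Degree of a vertex as the `ncard` of its neighbour set. -/
noncomputable def degN {V : Type u} (H : SimpleGraph V) (x : V) : ℕ :=
  (H.neighborSet x).ncard

/-- `a` and `b` are joined by a walk in `G` with no internal vertex in `S`. -/
def JoinedOffSet {V : Type u} (G : SimpleGraph V) (S : Set V) (a b : V) : Prop :=
  ∃ p : G.Walk a b, ∀ x ∈ p.support, x = a ∨ x = b ∨ x ∉ S

/-- `U` is a bridge of `G|S`: a maximal set of vertices any two of which are joined
by a path in `G` with no internal vertex in `S`. -/
def IsBridgeOf {V : Type u} (G : SimpleGraph V) (S : Set V) (U : Set V) : Prop :=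
  U.Nonempty ∧ (∀ a ∈ U, ∀ b ∈ U, JoinedOffSet G S a b) ∧
    ∀ U' : Set V, U ⊆ U' → (∀ a ∈ U', ∀ b ∈ U', JoinedOffSet G S a b) → U' = U

/-- `S` is a separating set of `G`: removing it disconnects the graph. -/
def IsSeparating {V : Type u} (G : SimpleGraph V) (S : Set V) : Prop :=
  ¬ (G.induce Sᶜ).Connected

/-- `G` is 3-connected: connected, and no set of at most two vertices disconnects it. -/
def ThreeConnected {V : Type u} (G : SimpleGraph V) : Prop :=
  G.Connected ∧ ∀ S : Set V, S.ncard ≤ 2 → (G.induce Sᶜ).Connected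

/-- The wheel `W_k`: a cycle on vertices `0, …, k-1` together with a hub `k`
adjacent to every rim vertex. -/
def wheel (k : ℕ) : SimpleGraph (Fin (k + 1)) :=
  SimpleGraph.fromRel (fun a b =>
    a.val = k ∨ b.val = k ∨ (a.val < k ∧ b.val < k ∧ (a.val + 1) % k = b.val))

/-- `H` is a subdivision of `F` via the branch-vertex embedding `f`:
each edge of `F` is replaced by a path of `H`, paths are internally disjoint,
internal vertices are not branch vertices, and every (non-isolated) vertex and
every edge of `H` lies on one of these paths. -/
def IsSubdivisionWith {α : Type u} {V : Type v} (F : SimpleGraph α) (H : SimpleGraph V)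
    (f : α → V) : Prop :=
  Function.Injective f ∧
  ∃ P : ∀ a b : α, F.Adj a b → H.Walk (f a) (f b),
    (∀ a b (h : F.Adj a b), (P a b h).IsPath) ∧
    (∀ a b (h : F.Adj a b), ∀ c ∈ (P a b h).support, c ≠ f a → c ≠ f b → c ∉ Set.range f) ∧
    (∀ a b (h : F.Adj a b), ∀ a' b' (h' : F.Adj a' b'), s(a, b) ≠ s(a', b') →
      ∀ c, c ∈ (P a b h).support → c ∈ (P a' b' h').support →
        (c = f a ∨ c = f b) ∧ (c = f a' ∨ c = f b')) ∧
    (∀ x ∈ H.support, ∃ a, ∃ b, ∃ h : F.Adj a b, x ∈ (P a b h).support) ∧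
    (∀ e ∈ H.edgeSet, ∃ a, ∃ b, ∃ h : F.Adj a b, e ∈ (P a b h).edges)

/-- `H` is a subdivision of `F`. -/
def IsSubdivision {α : Type u} {V : Type v} (F : SimpleGraph α) (H : SimpleGraph V) : Prop :=
  ∃ f : α → V, IsSubdivisionWith F H f

/-- `H` is a subdivision of the wheel with `k` spokes. -/
def IsWheelSubdivision {V : Type v} (H : SimpleGraph V) (k : ℕ) : Prop :=
  IsSubdivision (wheel k) H

/-- `G` contains a `W_k`-subdivision as a subgraph. -/
def ContainsWheel {V : Type v} (G : SimpleGraph V) (k : ℕ) : Prop :=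
  ∃ H : SimpleGraph V, H ≤ G ∧ IsWheelSubdivision H k

/-- `G` contains a `W_k`-subdivision centred on `x` (i.e. `x` is its degree-`k` vertex). -/
def ContainsWheelCenteredOn {V : Type v} (G : SimpleGraph V) (k : ℕ) (x : V) : Prop :=
  ∃ H : SimpleGraph V, H ≤ G ∧ IsWheelSubdivision H k ∧ degN H x = k

/-- `a` and `b` are joined by a path lying in the bridge `A` of `G|S`,
internally disjoint from `S`. -/
def PathInBridge {V : Type u} (G : SimpleGraph V) (S A : Set V) (a b : V) : Prop :=
  IsBridgeOf G S A ∧ ∃ p : G.Walk a b, p.IsPath ∧ (∀ x ∈ p.support, x ∈ A) ∧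
    (∀ x ∈ p.support, x = a ∨ x = b ∨ x ∉ S)
namespace StmtAux

open SimpleGraph Walk

variable {V : Type u}
 {Γ : SimpleGraph V}

/-- First hit of a set `T` along a walk. -/
lemma firstHit {a b : V} (w : Γ.Walk a b) (T : Set V) (hm : ∃ m ∈ w.support, m ∈ T) :
    ∃ q, ∃ w' : Γ.Walk a q, q ∈ T ∧ (∀ y ∈ w'.support, y ∈ w.support) ∧
      (∀ e ∈ w'.edges, e ∈ w.edges) ∧ (∀ y ∈ w'.support, y ∈ T → y = q) ∧
      (w.IsPath → w'.IsPath) := by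
  induction w with
  | nil =>
    obtain ⟨m, hm1, hm2⟩ := hm
    simp only [support_nil, List.mem_singleton] at hm1
    subst hm1
    exact ⟨_, Walk.nil, hm2, by simp, by simp, by simp, fun h => h⟩
  | @cons u v b h p ih =>
    by_cases hu : u ∈ T
    · exact ⟨u, Walk.nil, hu, by simp, by simp, by simp, fun _ => IsPath.nil⟩
    · have hm' : ∃ m ∈ p.support, m ∈ T := by
        obtain ⟨m, hm1, hm2⟩ := hm
        rcases (by simpa using hm1 : m = u ∨ m ∈ p.support) with rfl | hmp
        · exact absurd hm2 hu
        · exact ⟨m, hmp, hm2⟩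
      obtain ⟨q, w', hq, hsub, hesub, honly, hpath⟩ := ih hm'
      refine ⟨q, Walk.cons h w', hq, ?_, ?_, ?_, ?_⟩
      · intro y hy
        rcases (by simpa using hy : y = u ∨ y ∈ w'.support) with rfl | hyw
        · simp
        · simp [hsub y hyw]
      · intro e he
        rcases (by simpa using he : e = s(u, v) ∨ e ∈ w'.edges) with rfl | hew
        · simp
        · simp [hesub e hew]
      · intro y hy hyT
        rcases (by simpa using hy : y = u ∨ y ∈ w'.support) with rfl | hyw
        · exact absurd hyT hu
        · exact honly y hyw hyT
      · intro hcp
        rw [Walk.cons_isPath_iff] at hcp ⊢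
        exact ⟨hpath hcp.1, fun hx => hcp.2 (hsub u hx)⟩

/-- Last hit of a set `T` along a walk. -/
lemma lastHit {a b : V} (w : Γ.Walk a b) (T : Set V) (hm : ∃ m ∈ w.support, m ∈ T) :
    ∃ q, ∃ w' : Γ.Walk q b, q ∈ T ∧ (∀ y ∈ w'.support, y ∈ w.support) ∧
      (∀ e ∈ w'.edges, e ∈ w.edges) ∧ (∀ y ∈ w'.support, y ∈ T → y = q) ∧
      (w.IsPath → w'.IsPath) := by
  obtain ⟨q, w', hq, hsub, hesub, honly, hpath⟩ := firstHit w.reverse T (by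
    obtain ⟨m, hm1, hm2⟩ := hm
    exact ⟨m, by simpa [Walk.support_reverse] using hm1, hm2⟩)
  refine ⟨q, w'.reverse, hq, ?_, ?_, ?_, ?_⟩
  · intro y hy
    have := hsub y (by simpa [Walk.support_reverse] using hy)
    simpa [Walk.support_reverse] using this
  · intro e he
    have := hesub e (by simpa [Walk.edges_reverse] using he)
    simpa [Walk.edges_reverse] using this
  · intro y hy hyT
    exact honly y (by simpa [Walk.support_reverse] using hy) hyT
  · intro hp
    exact (hpath hp.reverse).reverse

lemma append_isPath {a b c : V} {p : Γ.Walk a b} {q : Γ.Walk b c} (hp : p.IsPath)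
    (hq : q.IsPath) (h : ∀ y ∈ p.support, y ∈ q.support → y = b) :
    (p.append q).IsPath := by
  rw [Walk.isPath_def, Walk.support_append]
  have htail : q.support.tail.Nodup := by
    have := hq.support_nodup
    rw [q.support_eq_cons] at this
    exact this.of_cons
  refine hp.support_nodup.append htail ?_
  intro y hyp hyt
  have hyq : y ∈ q.support := by
    rw [q.support_eq_cons]
    exact List.mem_cons_of_mem _ hyt
  have hyb : y = b := h y hyp hyq
  subst hyb
  have := hq.support_nodup
  rw [q.support_eq_cons] at this
  exact (List.nodup_cons.mp this).1 hyt

lemma exists_boundary {a b : V} (w : Γ.Walk a b) (Pset : Set V) :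
    a ∈ Pset → b ∉ Pset →
    ∃ p q, Γ.Adj p q ∧ p ∈ Pset ∧ q ∉ Pset ∧ p ∈ w.support ∧ q ∈ w.support := by
  induction w with
  | nil => intro ha hb; exact absurd ha hb
  | @cons u v b h p ih =>
    intro ha hb
    by_cases hv : v ∈ Pset
    · obtain ⟨p', q', h1, h2, h3, h4, h5⟩ := ih hv hb
      exact ⟨p', q', h1, h2, h3, by simp [h4], by simp [h5]⟩
    · exact ⟨u, v, h, ha, hv, by simp, by simp⟩

lemma walkStay {C T : Set V} (hclose : ∀ v ∈ C, ∀ u, Γ.Adj v u → u ∉ T → u ∈ C)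
    {a b : V} (w : Γ.Walk a b) : a ∈ C → b ∈ T →
    ∃ q, ∃ w' : Γ.Walk a q, q ∈ T ∧ (∀ y ∈ w'.support, y ∈ w.support) ∧
      (∀ y ∈ w'.support, y ≠ q → y ∈ C ∧ y ∉ T) := by
  induction w with
  | nil =>
    intro _ hb
    exact ⟨_, Walk.nil, hb, by simp, by simp⟩
  | @cons u v b h p ih =>
    intro ha hb
    by_cases huT : u ∈ T
    · exact ⟨u, Walk.nil, huT, by simp, by simp⟩
    · by_cases hvT : v ∈ T
      · refine ⟨v, Walk.cons h Walk.nil, hvT, by simp, ?_⟩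
        intro y hy hyq
        rcases (by simpa using hy : y = u ∨ y = v) with rfl | rfl
        · exact ⟨ha, huT⟩
        · exact absurd rfl hyq
      · have hvC : v ∈ C := hclose u ha v h hvT
        obtain ⟨q, w', hq, hsub, hCT⟩ := ih hvC hb
        refine ⟨q, Walk.cons h w', hq, ?_, ?_⟩
        · intro y hy
          rcases (by simpa using hy : y = u ∨ y ∈ w'.support) with rfl | hyw
          · simp
          · simp [hsub y hyw]
        · intro y hy hyq
          rcases (by simpa using hy : y = u ∨ y ∈ w'.support) with rfl | hyw
          · exact ⟨ha, huT⟩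
          · exact hCT y hyw hyq

lemma eq_end_of_mem_takeUntil [DecidableEq V] {a t z : V} (p : Γ.Walk a t) (hp : p.IsPath)
    (hz : z ∈ p.support) (ht : t ∈ (p.takeUntil z hz).support) : z = t := by
  by_contra hne
  have hspec := p.take_spec hz
  have hnd := hp.support_nodup
  rw [← hspec, Walk.support_append] at hnd
  obtain ⟨-, -, hdisj⟩ := List.nodup_append.mp hnd
  have htd : t ∈ (p.dropUntil z hz).support := (p.dropUntil z hz).end_mem_support
  rw [(p.dropUntil z hz).support_eq_cons] at htd
  rcases List.mem_cons.mp htd with h1 | h2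
  · exact hne h1.symm
  · exact hdisj t ht t h2 rfl

lemma eq_start_of_mem_dropUntil [DecidableEq V] {t b z : V} (p : Γ.Walk t b) (hp : p.IsPath)
    (hz : z ∈ p.support) (ht : t ∈ (p.dropUntil z hz).support) : z = t := by
  by_contra hne
  have hspec := p.take_spec hz
  have hnd := hp.support_nodup
  rw [← hspec, Walk.support_append] at hnd
  obtain ⟨-, -, hdisj⟩ := List.nodup_append.mp hnd
  have htt : t ∈ (p.takeUntil z hz).support := (p.takeUntil z hz).start_mem_support
  rw [(p.dropUntil z hz).support_eq_cons] at ht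
  rcases List.mem_cons.mp ht with h1 | h2
  · exact hne h1.symm
  · exact hdisj t htt t h2 rfl

/-- Trim a path so that it meets `A` only at its start and `B` only at its end. -/
lemma trim {A B : Set V} {a b : V} (w : Γ.Walk a b) (hw : w.IsPath) (ha : a ∈ A)
    (hb : b ∈ B) :
    ∃ a' b', ∃ p : Γ.Walk a' b', p.IsPath ∧ a' ∈ A ∧ b' ∈ B ∧
      (∀ y ∈ p.support, y ∈ w.support) ∧
      (∀ y ∈ p.support, y ∈ A → y = a') ∧ (∀ y ∈ p.support, y ∈ B → y = b') := by
  obtain ⟨q, w1, hqA, hsub1, -, honly1, hpath1⟩ :=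
    lastHit w A ⟨a, w.start_mem_support, ha⟩
  obtain ⟨q2, w2, hq2B, hsub2, -, honly2, hpath2⟩ :=
    firstHit w1 B ⟨b, w1.end_mem_support, hb⟩
  refine ⟨q, q2, w2, hpath2 (hpath1 hw), hqA, hq2B, ?_, ?_, ?_⟩
  · exact fun y hy => hsub1 y (hsub2 y hy)
  · exact fun y hy hyA => honly1 y (hsub2 y hy) hyA
  · exact fun y hy hyB => honly2 y hy hyB

/-- Restriction of a graph to a vertex set (as a graph on the same vertex type). -/
def Gres (Γ : SimpleGraph V) (W : Set V) : SimpleGraph V where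
  Adj a b := Γ.Adj a b ∧ a ∈ W ∧ b ∈ W
  symm := by
    refine ⟨?_⟩
    intro a b ⟨h, ha, hb⟩
    exact ⟨h.symm, hb, ha⟩
  loopless := ⟨fun a ⟨h, _, _⟩ => Γ.irrefl h⟩

lemma gres_le {W : Set V} : Gres Γ W ≤ Γ := by intro v w h; exact (show Γ.Adj v w ∧ v ∈ W ∧ w ∈ W from h).1

lemma toGres {W : Set V} {a b : V} (w : Γ.Walk a b) (hw : ∀ y ∈ w.support, y ∈ W) :
    ∃ w' : (Gres Γ W).Walk a b, w'.support = w.support := by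
  induction w with
  | nil => exact ⟨Walk.nil, rfl⟩
  | @cons u v b h p ih =>
    obtain ⟨w', hw'⟩ := ih (fun y hy => hw y (by simp [hy]))
    have hadj : (Gres Γ W).Adj u v :=
      (⟨h, hw u (by simp), hw v (by simp)⟩ : Γ.Adj u v ∧ u ∈ W ∧ v ∈ W)
    refine ⟨Walk.cons hadj w', by simp [hw']⟩

/-- Transfer of a walk along `≤`. -/
lemma leWalk {Γ Γ' : SimpleGraph V} (hle : Γ ≤ Γ') {a b : V} (w : Γ.Walk a b) :
    ∃ w' : Γ'.Walk a b, w'.support = w.support ∧ (w.IsPath → w'.IsPath) := by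
  have hedges : ∀ e ∈ w.edges, e ∈ Γ'.edgeSet :=
    fun e he => edgeSet_mono hle (Walk.edges_subset_edgeSet w he)
  exact ⟨w.transfer Γ' hedges, w.support_transfer hedges,
    fun hp => hp.transfer hedges⟩

lemma gres_support {W : Set V} {a b : V} (w : (Gres Γ W).Walk a b) :
    a ∈ W → ∀ y ∈ w.support, y ∈ W := by
  induction w with
  | nil =>
    intro ha y hy
    simp only [Walk.support_nil, List.mem_singleton] at hy
    subst hy; exact ha
  | @cons u v b h p ih =>
    intro ha y hy
    rcases (by simpa using hy : y = u ∨ y ∈ p.support) with rfl | hyp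
    · exact ha
    · exact ih (show Γ.Adj u v ∧ u ∈ W ∧ v ∈ W from h).2.2 y hyp

lemma walk_eq_of_no_edges (hE : Γ.edgeSet = ∅) {a b : V} (w : Γ.Walk a b) :
    a = b ∧ w.support = [a] := by
  cases w with
  | nil => simp
  | cons h p =>
    have hmem : s(_, _) ∈ Γ.edgeSet := Γ.mem_edgeSet.mpr h
    rw [hE] at hmem
    exact hmem.elim


def MSep (Γ : SimpleGraph V) (A B Z : Set V) : Prop :=
  ∀ a ∈ A, ∀ b ∈ B, ∀ w : Γ.Walk a b, ∃ z ∈ Z, z ∈ w.support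

def MConc (Γ : SimpleGraph V) (A B : Set V) : Prop :=
  ∃ a1 b1 a2 b2, ∃ p1 : Γ.Walk a1 b1, ∃ p2 : Γ.Walk a2 b2,
    a1 ∈ A ∧ b1 ∈ B ∧ a2 ∈ A ∧ b2 ∈ B ∧ p1.IsPath ∧ p2.IsPath ∧
    (∀ z ∈ p1.support, z ∈ A → z = a1) ∧ (∀ z ∈ p1.support, z ∈ B → z = b1) ∧
    (∀ z ∈ p2.support, z ∈ A → z = a2) ∧ (∀ z ∈ p2.support, z ∈ B → z = b2) ∧
    (∀ z ∈ p1.support, z ∉ p2.support)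

lemma menger_base [Fintype V] (Γ : SimpleGraph V) (A B : Set V) (hE : Γ.edgeSet = ∅)
    (hsep : ∀ Z, MSep Γ A B Z → 2 ≤ Z.ncard) : MConc Γ A B := by
  have hAB : MSep Γ A B (A ∩ B) := by
    intro a ha b hb w
    obtain ⟨rfl, -⟩ := walk_eq_of_no_edges hE w
    exact ⟨a, ⟨ha, hb⟩, w.start_mem_support⟩
  have h2 := hsep _ hAB
  have h2'' : 1 < (A ∩ B).ncard := by omega
  obtain ⟨x1, x2, h1, h2', hne⟩ := (Set.one_lt_ncard_iff (Set.toFinite _)).mp h2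
  refine ⟨x1, x1, x2, x2, Walk.nil, Walk.nil, h1.1, h1.2, h2'.1, h2'.2,
    IsPath.nil, IsPath.nil, ?_, ?_, ?_, ?_, ?_⟩ <;>
    · intro z hz
      simp only [Walk.support_nil, List.mem_singleton] at hz
      subst hz
      simp [hne]

lemma mconc_transfer {Γ Γ' : SimpleGraph V} (hle : Γ ≤ Γ') (A B : Set V)
    (h : MConc Γ A B) : MConc Γ' A B := by
  obtain ⟨a1, b1, a2, b2, p1, p2, h1, h2, h3, h4, h5, h6, h7, h8, h9, h10, h11⟩ := h
  obtain ⟨p1', hs1, hp1'⟩ := leWalk hle p1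
  obtain ⟨p2', hs2, hp2'⟩ := leWalk hle p2
  refine ⟨a1, b1, a2, b2, p1', p2', h1, h2, h3, h4, hp1' h5, hp2' h6, ?_, ?_, ?_, ?_, ?_⟩
  · intro z hz; rw [hs1] at hz; exact h7 z hz
  · intro z hz; rw [hs1] at hz; exact h8 z hz
  · intro z hz; rw [hs2] at hz; exact h9 z hz
  · intro z hz; rw [hs2] at hz; exact h10 z hz
  · intro z hz; rw [hs1] at hz; rw [hs2]; exact h11 z hz

theorem menger2 [Fintype V] (Γ : SimpleGraph V) (A B : Set V)
    (hsep : ∀ Z, MSep Γ A B Z → 2 ≤ Z.ncard) : MConc Γ A B := by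
  classical
  suffices H : ∀ n (Γ : SimpleGraph V) (A B : Set V), Γ.edgeSet.ncard ≤ n →
      (∀ Z, MSep Γ A B Z → 2 ≤ Z.ncard) → MConc Γ A B from
    H Γ.edgeSet.ncard Γ A B le_rfl hsep
  intro n
  induction n with
  | zero =>
    intro Γ A B hcard hsep
    exact menger_base Γ A B ((Set.ncard_eq_zero (Set.toFinite _)).mp
      (Nat.le_zero.mp hcard)) hsep
  | succ n ih =>
    intro Γ A B hcard hsep
    by_cases hE : Γ.edgeSet = ∅
    · exact menger_base Γ A B hE hsep
    obtain ⟨u, v, huv⟩ : ∃ u v, Γ.Adj u v := by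
      obtain ⟨e, he⟩ := Set.nonempty_iff_ne_empty.mpr hE
      induction e using Sym2.ind with
      | _ u v => exact ⟨u, v, Γ.mem_edgeSet.mp he⟩
    set Γ' := Γ.deleteEdges {s(u, v)} with hΓ'
    have hE' : Γ'.edgeSet = Γ.edgeSet \ {s(u, v)} := Γ.edgeSet_deleteEdges _
    have hle' : Γ' ≤ Γ := Γ.deleteEdges_le _
    have hcard' : Γ'.edgeSet.ncard ≤ n := by
      rw [hE']
      have hmem : s(u, v) ∈ Γ.edgeSet := Γ.mem_edgeSet.mpr huv
      have h1 : (Γ.edgeSet \ {s(u, v)}).ncard + 1 = Γ.edgeSet.ncard :=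
        Set.ncard_diff_singleton_add_one hmem (Set.toFinite _)
      omega
    by_cases hsep' : ∀ Z, MSep Γ' A B Z → 2 ≤ Z.ncard
    · exact mconc_transfer hle' A B (ih Γ' A B hcard' hsep')
    push_neg at hsep'
    obtain ⟨Z, hZsep, hZlt⟩ := hsep'
    have htrans : ∀ {a b : V} (w : Γ.Walk a b), s(u, v) ∉ w.edges →
        ∃ w' : Γ'.Walk a b, w'.support = w.support := by
      intro a b w hw
      have hedges : ∀ e ∈ w.edges, e ∈ Γ'.edgeSet := by
        intro e hew
        rw [hE']
        exact ⟨Walk.edges_subset_edgeSet w hew, by rintro rfl; exact hw hew⟩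
      exact ⟨w.transfer Γ' hedges, w.support_transfer hedges⟩
    have hsepU : MSep Γ A B (insert u Z) := by
      intro a ha b hb w
      by_cases hew : s(u, v) ∈ w.edges
      · exact ⟨u, Set.mem_insert _ _, w.fst_mem_support_of_mem_edges hew⟩
      · obtain ⟨w', hw'⟩ := htrans w hew
        obtain ⟨z, hz1, hz2⟩ := hZsep a ha b hb w'
        exact ⟨z, Set.mem_insert_of_mem _ hz1, by rwa [hw'] at hz2⟩
    have hsepV : MSep Γ A B (insert v Z) := by
      intro a ha b hb w
      by_cases hew : s(u, v) ∈ w.edges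
      · exact ⟨v, Set.mem_insert _ _, w.snd_mem_support_of_mem_edges hew⟩
      · obtain ⟨w', hw'⟩ := htrans w hew
        obtain ⟨z, hz1, hz2⟩ := hZsep a ha b hb w'
        exact ⟨z, Set.mem_insert_of_mem _ hz1, by rwa [hw'] at hz2⟩
    have hU2 := hsep _ hsepU
    have hV2 := hsep _ hsepV
    have hZ1 : Z.ncard = 1 := by
      have h1 := Set.ncard_insert_le u Z
      omega
    obtain ⟨y, rfl⟩ := Set.ncard_eq_one.mp hZ1
    have huy : u ≠ y := by
      rintro rfl
      rw [Set.insert_eq_self.mpr (Set.mem_singleton _)] at hU2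
      simp [Set.ncard_singleton] at hU2
    have hvy : v ≠ y := by
      rintro rfl
      rw [Set.insert_eq_self.mpr (Set.mem_singleton _)] at hV2
      simp [Set.ncard_singleton] at hV2
    have huvne : u ≠ v := Γ.ne_of_adj huv
    set T3 : Set V := {y, u, v} with hT3
    have hyT3 : y ∈ T3 := by rw [hT3]; simp
    have huT3 : u ∈ T3 := by rw [hT3]; simp
    have hvT3 : v ∈ T3 := by rw [hT3]; simp
    have hT3mem : ∀ t, t ∈ T3 → t ≠ y → t = u ∨ t = v := by
      intro t ht hne
      rw [hT3] at ht
      simp only [Set.mem_insert_iff, Set.mem_singleton_iff] at ht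
      tauto
    have hyS : ∀ a ∈ A, ∀ b ∈ B, ∀ w : Γ'.Walk a b, y ∈ w.support := by
      intro a ha b hb w
      obtain ⟨z, hz1, hz2⟩ := hZsep a ha b hb w
      rwa [Set.mem_singleton_iff.mp hz1] at hz2
    have hmeet : ∀ {a b : V}, a ∈ A → b ∈ B → ∀ w : Γ.Walk a b,
        ∃ m ∈ w.support, m ∈ T3 := by
      intro a b ha hb w
      by_cases hew : s(u, v) ∈ w.edges
      · exact ⟨u, w.fst_mem_support_of_mem_edges hew, huT3⟩
      · obtain ⟨w', hw'⟩ := htrans w hew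
        exact ⟨y, by rw [← hw']; exact hyS a ha b hb w', hyT3⟩
    have sepA : ∀ Z', MSep Γ' A T3 Z' → 2 ≤ Z'.ncard := by
      intro Z' hZ'
      apply hsep
      intro a ha b hb w
      obtain ⟨q, w2, hq, hsub, hesub, honly, -⟩ := firstHit w T3 (hmeet ha hb w)
      have hew2 : s(u, v) ∉ w2.edges := by
        intro hc
        have h1 := honly u (w2.fst_mem_support_of_mem_edges hc) huT3
        have h2 := honly v (w2.snd_mem_support_of_mem_edges hc) hvT3
        exact huvne (h1.trans h2.symm)
      obtain ⟨w2', hw2'⟩ := htrans w2 hew2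
      obtain ⟨z, hz1, hz2⟩ := hZ' a ha q hq w2'
      exact ⟨z, hz1, hsub z (by rwa [hw2'] at hz2)⟩
    have sepB : ∀ Z', MSep Γ' T3 B Z' → 2 ≤ Z'.ncard := by
      intro Z' hZ'
      apply hsep
      intro a ha b hb w
      obtain ⟨q, w2, hq, hsub, hesub, honly, -⟩ := lastHit w T3 (hmeet ha hb w)
      have hew2 : s(u, v) ∉ w2.edges := by
        intro hc
        have h1 := honly u (w2.fst_mem_support_of_mem_edges hc) huT3
        have h2 := honly v (w2.snd_mem_support_of_mem_edges hc) hvT3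
        exact huvne (h1.trans h2.symm)
      obtain ⟨w2', hw2'⟩ := htrans w2 hew2
      obtain ⟨z, hz1, hz2⟩ := hZ' q hq b hb w2'
      exact ⟨z, hz1, hsub z (by rwa [hw2'] at hz2)⟩
    obtain ⟨α1, t1, α2, t2, p1, p2, hα1, ht1, hα2, ht2, hp1, hp2, hp1A, hp1T, hp2A,
      hp2T, hdisjp⟩ := ih Γ' A T3 hcard' sepA
    obtain ⟨t1', β1, t2', β2, q1, q2, ht1', hβ1, ht2', hβ2, hq1, hq2, hq1T, hq1B,
      hq2T, hq2B, hdisjq⟩ := ih Γ' T3 B hcard' sepB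
    have cross : ∀ {aa t t' bb : V} (p : Γ'.Walk aa t) (q : Γ'.Walk t' bb),
        aa ∈ A → bb ∈ B → t ∈ T3 → t' ∈ T3 →
        (∀ z ∈ p.support, z ∈ T3 → z = t) → (∀ z ∈ q.support, z ∈ T3 → z = t') →
        p.IsPath → q.IsPath →
        ∀ z, z ∈ p.support → z ∈ q.support → z = t ∧ z = t' := by
      intro aa t t' bb p q ha hb htT ht'T hpT hqT hp hq z hzp hzq
      have hy := hyS aa ha bb hb ((p.takeUntil z hzp).append (q.dropUntil z hzq))
      rw [Walk.mem_support_append_iff] at hy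
      rcases hy with hy | hy
      · have hymem : y ∈ p.support := Walk.support_takeUntil_subset _ hzp hy
        have hyt : y = t := hpT y hymem hyT3
        have hzt : z = t := eq_end_of_mem_takeUntil p hp hzp (hyt ▸ hy)
        exact ⟨hzt, hqT z hzq (hzt ▸ htT)⟩
      · have hymem : y ∈ q.support := Walk.support_dropUntil_subset _ hzq hy
        have hyt : y = t' := hqT y hymem hyT3
        have hzt' : z = t' := eq_start_of_mem_dropUntil q hq hzq (hyt ▸ hy)
        exact ⟨hpT z hzp (hzt' ▸ ht'T), hzt'⟩
    have noShare : ∀ {aa t bb : V} (p : Γ'.Walk aa t) (q : Γ'.Walk t bb),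
        aa ∈ A → bb ∈ B → t ∈ T3 →
        (∀ z ∈ p.support, z ∈ T3 → z = t) → (∀ z ∈ q.support, z ∈ T3 → z = t) →
        t = y := by
      intro aa t bb p q ha hb htT hpT hqT
      have hy := hyS aa ha bb hb (p.append q)
      rw [Walk.mem_support_append_iff] at hy
      rcases hy with hy | hy
      · exact (hpT y hy hyT3).symm
      · exact (hqT y hy hyT3).symm
    have ht12 : t1 ≠ t2 := by
      intro hc
      exact hdisjp t1 p1.end_mem_support (by rw [hc]; exact p2.end_mem_support)
    have ht12' : t1' ≠ t2' := by
      intro hc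
      exact hdisjq t1' q1.start_mem_support (by rw [hc]; exact q2.start_mem_support)
    have assemble : ∀ {aY aE bY bE τA τB : V} (pY : Γ'.Walk aY y) (pE : Γ'.Walk aE τA)
        (qY : Γ'.Walk y bY) (qE : Γ'.Walk τB bE),
        aY ∈ A → aE ∈ A → bY ∈ B → bE ∈ B → τA ∈ T3 → τA ≠ y → τB ∈ T3 → τB ≠ y →
        pY.IsPath → pE.IsPath → qY.IsPath → qE.IsPath →
        (∀ z ∈ pY.support, z ∈ T3 → z = y) → (∀ z ∈ pE.support, z ∈ T3 → z = τA) →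
        (∀ z ∈ qY.support, z ∈ T3 → z = y) → (∀ z ∈ qE.support, z ∈ T3 → z = τB) →
        (∀ z ∈ pY.support, z ∉ pE.support) → (∀ z ∈ qY.support, z ∉ qE.support) →
        MConc Γ A B := by
      intro aY aE bY bE τA τB pY pE qY qE haY haE hbY hbE hτA hτAy hτB hτBy
        hpY hpE hqY hqE hpYT hpET hqYT hqET hdp hdq
      have hτAB : τA ≠ τB := by
        intro hc
        subst hc
        exact hτAy (noShare pE qE haE hbE hτA hpET hqET)
      have hadj : Γ.Adj τA τB := by
        rcases hT3mem τA hτA hτAy with rfl | rfl <;>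
          rcases hT3mem τB hτB hτBy with rfl | rfl
        · exact absurd rfl hτAB
        · exact huv
        · exact huv.symm
        · exact absurd rfl hτAB
      obtain ⟨pY', hpYs, hpYp⟩ := leWalk hle' pY
      obtain ⟨pE', hpEs, hpEp⟩ := leWalk hle' pE
      obtain ⟨qY', hqYs, hqYp⟩ := leWalk hle' qY
      obtain ⟨qE', hqEs, hqEp⟩ := leWalk hle' qE
      have hR1 : (pY'.append qY').IsPath := by
        refine append_isPath (hpYp hpY) (hqYp hqY) ?_
        intro z hz1 hz2
        exact (cross pY qY haY hbY hyT3 hyT3 hpYT hqYT hpY hqY z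
          (by rwa [hpYs] at hz1) (by rwa [hqYs] at hz2)).1
      have hτAq : τA ∉ qE'.support := by
        rw [hqEs]
        intro hc
        exact hτAB (hqET τA hc hτA)
      have hR2i : (Walk.cons hadj qE').IsPath := by
        rw [Walk.cons_isPath_iff]
        exact ⟨hqEp hqE, hτAq⟩
      have hR2 : (pE'.append (Walk.cons hadj qE')).IsPath := by
        refine append_isPath (hpEp hpE) hR2i ?_
        intro z hz1 hz2
        rcases (by simpa using hz2 : z = τA ∨ z ∈ qE'.support) with rfl | hzq
        · rfl
        · exfalso
          have hcr := cross pE qE haE hbE hτA hτB hpET hqET hpE hqE z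
            (by rwa [hpEs] at hz1) (by rwa [hqEs] at hzq)
          exact hτAB (hcr.1.symm.trans hcr.2)
      have hdisjR : ∀ z ∈ (pY'.append qY').support,
          z ∉ (pE'.append (Walk.cons hadj qE')).support := by
        intro z hz1 hz2
        rw [Walk.mem_support_append_iff] at hz1 hz2
        rw [hpYs, hqYs] at hz1
        rcases hz2 with hz2 | hz2
        · rw [hpEs] at hz2
          rcases hz1 with hz1 | hz1
          · exact hdp z hz1 hz2
          · have hcr := cross pE qY haE hbY hτA hyT3 hpET hqYT hpE hqY z hz2 hz1
            exact hτAy (hcr.1.symm.trans hcr.2)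
        · rcases (by simpa using hz2 : z = τA ∨ z ∈ qE'.support) with rfl | hzq
          · rcases hz1 with hz1 | hz1
            · exact hτAy (hpYT z hz1 hτA)
            · exact hτAy (hqYT z hz1 hτA)
          · rw [hqEs] at hzq
            rcases hz1 with hz1 | hz1
            · have hcr := cross pY qE haY hbE hyT3 hτB hpYT hqET hpY hqE z hz1 hzq
              exact hτBy (hcr.1.symm.trans hcr.2).symm
            · exact hdq z hz1 hzq
      obtain ⟨a1', b1', r1, hr1p, hr1a, hr1b, hr1sub, hr1A, hr1B⟩ :=
        trim (A := A) (B := B) (pY'.append qY') hR1 haY hbY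
      obtain ⟨a2', b2', r2, hr2p, hr2a, hr2b, hr2sub, hr2A, hr2B⟩ :=
        trim (A := A) (B := B) (pE'.append (Walk.cons hadj qE')) hR2 haE hbE
      exact ⟨a1', b1', a2', b2', r1, r2, hr1a, hr1b, hr2a, hr2b, hr1p, hr2p,
        hr1A, hr1B, hr2A, hr2B,
        fun z hz hz2 => hdisjR z (hr1sub z hz) (hr2sub z hz2)⟩
    have hy12 : t1 = y ∨ t2 = y := by
      by_contra hc
      push_neg at hc
      obtain ⟨h1, h2⟩ := hc
      have h12uv : (t1 = u ∨ t1 = v) ∧ (t2 = u ∨ t2 = v) :=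
        ⟨hT3mem t1 ht1 h1, hT3mem t2 ht2 h2⟩
      have main : ∀ {t' bb : V} (q : Γ'.Walk t' bb), bb ∈ B → t' ∈ T3 → t' ≠ y →
          (∀ z ∈ q.support, z ∈ T3 → z = t') → False := by
        intro t' bb q hbbB ht'T ht'y hqT
        have hcase : t' = t1 ∨ t' = t2 := by
          rcases hT3mem t' ht'T ht'y with rfl | rfl
          · rcases h12uv.1 with hh | hh
            · exact Or.inl hh.symm
            · rcases h12uv.2 with hh' | hh'
              · exact Or.inr hh'.symm
              · exact absurd (hh.trans hh'.symm) ht12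
          · rcases h12uv.1 with hh | hh
            · rcases h12uv.2 with hh' | hh'
              · exact absurd (hh.trans hh'.symm) ht12
              · exact Or.inr hh'.symm
            · exact Or.inl hh.symm
        rcases hcase with rfl | rfl
        · exact h1 (noShare p1 q hα1 hbbB ht1 hp1T hqT)
        · exact h2 (noShare p2 q hα2 hbbB ht2 hp2T hqT)
      have hk : t1' ≠ y ∨ t2' ≠ y := by
        by_contra hc2
        push_neg at hc2
        exact ht12' (hc2.1.trans hc2.2.symm)
      rcases hk with hk | hk
      · exact main q1 hβ1 ht1' hk hq1T
      · exact main q2 hβ2 ht2' hk hq2T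
    have hy12' : t1' = y ∨ t2' = y := by
      by_contra hc
      push_neg at hc
      obtain ⟨h1, h2⟩ := hc
      have h12uv : (t1' = u ∨ t1' = v) ∧ (t2' = u ∨ t2' = v) :=
        ⟨hT3mem t1' ht1' h1, hT3mem t2' ht2' h2⟩
      have main : ∀ {t aa : V} (p : Γ'.Walk aa t), aa ∈ A → t ∈ T3 → t ≠ y →
          (∀ z ∈ p.support, z ∈ T3 → z = t) → False := by
        intro t aa p haaA htT hty hpT
        have hcase : t = t1' ∨ t = t2' := by
          rcases hT3mem t htT hty with rfl | rfl
          · rcases h12uv.1 with hh | hh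
            · exact Or.inl hh.symm
            · rcases h12uv.2 with hh' | hh'
              · exact Or.inr hh'.symm
              · exact absurd (hh.trans hh'.symm) ht12'
          · rcases h12uv.1 with hh | hh
            · rcases h12uv.2 with hh' | hh'
              · exact absurd (hh.trans hh'.symm) ht12'
              · exact Or.inr hh'.symm
            · exact Or.inl hh.symm
        rcases hcase with rfl | rfl
        · exact h1 (noShare p q1 haaA hβ1 ht1' hpT hq1T)
        · exact h2 (noShare p q2 haaA hβ2 ht2' hpT hq2T)
      have hk : t1 ≠ y ∨ t2 ≠ y := by
        by_contra hc2
        push_neg at hc2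
        exact ht12 (hc2.1.trans hc2.2.symm)
      rcases hk with hk | hk
      · exact main p1 hα1 ht1 hk hp1T
      · exact main p2 hα2 ht2 hk hp2T
    rcases hy12 with h | h
    · subst h
      rcases hy12' with h' | h'
      · subst h'
        exact assemble p1 p2 q1 q2 hα1 hα2 hβ1 hβ2 ht2 (Ne.symm ht12) ht2' (Ne.symm ht12')
          hp1 hp2 hq1 hq2 hp1T hp2T hq1T hq2T hdisjp hdisjq
      · subst h'
        exact assemble p1 p2 q2 q1 hα1 hα2 hβ2 hβ1 ht2 (Ne.symm ht12) ht1' ht12'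
          hp1 hp2 hq2 hq1 hp1T hp2T hq2T hq1T hdisjp (fun z hz hz2 => hdisjq z hz2 hz)
    · subst h
      rcases hy12' with h' | h'
      · subst h'
        exact assemble p2 p1 q1 q2 hα2 hα1 hβ1 hβ2 ht1 ht12 ht2' (Ne.symm ht12')
          hp2 hp1 hq1 hq2 hp2T hp1T hq1T hq2T (fun z hz hz2 => hdisjp z hz2 hz) hdisjq
      · subst h'
        exact assemble p2 p1 q2 q1 hα2 hα1 hβ2 hβ1 ht1 ht12 ht1' ht12'
          hp2 hp1 hq2 hq1 hp2T hp1T hq2T hq1T (fun z hz hz2 => hdisjp z hz2 hz)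
          (fun z hz hz2 => hdisjq z hz2 hz)

-- extra aux (appended into namespace StmtAux)
variable {G : SimpleGraph V}

lemma reachable_induce {W : Set V} : ∀ {a b : V} (w : G.Walk a b),
    (∀ y ∈ w.support, y ∈ W) → ∀ (ha : a ∈ W) (hb : b ∈ W),
    (G.induce W).Reachable ⟨a, ha⟩ ⟨b, hb⟩ := by
  intro a b w
  induction w with
  | nil => intro _ ha hb; exact Reachable.refl _
  | @cons a v b hadj p ih =>
    intro hw ha hb
    have hv : v ∈ W := hw v (by simp)
    have hstep : (G.induce W).Adj ⟨a, ha⟩ ⟨v, hv⟩ := hadj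
    exact (hstep.reachable).trans (ih (fun y hy => hw y (by simp [hy])) hv hb)

lemma walk_of_induce {W : Set V} {a b : V} (ha : a ∈ W) (hb : b ∈ W)
    (hr : (G.induce W).Reachable ⟨a, ha⟩ ⟨b, hb⟩) :
    ∃ w : G.Walk a b, ∀ y ∈ w.support, y ∈ W := by
  obtain ⟨p⟩ := hr
  refine ⟨p.map (SimpleGraph.Embedding.induce W).toHom, ?_⟩
  intro y hy
  replace hy : y ∈ (p.map (SimpleGraph.Embedding.induce W).toHom).support := hy
  rw [Walk.support_map, List.mem_map] at hy
  obtain ⟨⟨z, hz⟩, hzm, rfl⟩ := hy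
  exact hz


end StmtAux

open StmtAux in
/-- Lemma 1 of the paper. -/
theorem stmt0 {V : Type u} [Fintype V] (G : SimpleGraph V) (S X : Set V) (x : V)
    (h3 : ThreeConnected G) (hsep : IsSeparating G S) (hS : S.ncard = 3)
    (hX : IsBridgeOf G S X) (hX2 : 2 ≤ (X \ S).ncard)
    (hedges : 4 ≤ {e : Sym2 V | e ∈ G.edgeSet ∧ ∃ a ∈ S, ∃ b ∈ X \ S, e = s(a, b)}.ncard)
    (hx : x ∈ S) (hnbr : 2 ≤ ((G.neighborSet x) ∩ (X \ S)).ncard) :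
    ∃ (a b : V) (P : G.Walk a b), a ∈ S ∧ b ∈ S ∧ P.IsPath ∧
      (∀ y ∈ P.support, y ∈ X) ∧ (∀ y ∈ P.support, y = a ∨ y = b ∨ y ∉ S) ∧
      x ∉ P.support ∧
      ∃ (q1 q2 : V) (Q1 : G.Walk x q1) (Q2 : G.Walk x q2),
        q1 ∈ P.support ∧ q2 ∈ P.support ∧ q1 ≠ q2 ∧
        Q1.IsPath ∧ Q2.IsPath ∧
        (∀ y ∈ Q1.support, y ∈ X) ∧ (∀ y ∈ Q2.support, y ∈ X) ∧
        (∀ y, y ∈ Q1.support → y ∈ Q2.support → y = x) ∧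
        (∀ y ∈ Q1.support, y ∈ P.support → y = q1) ∧
        (∀ y ∈ Q2.support, y ∈ P.support → y = q2) := by
  classical
  obtain ⟨h3conn, h3cut⟩ := h3
  obtain ⟨hXne, hXpair, hXmax⟩ := hX
  -- closure: a neighbour of a vertex of X \ S is in X
  have hclosure : ∀ w v : V, G.Adj w v → v ∈ X → v ∉ S → w ∈ X := by
    intro w v hadj hvX hvS
    have hjoin : ∀ c ∈ X, JoinedOffSet G S w c := by
      intro c hc
      obtain ⟨p, hp⟩ := hXpair v hvX c hc
      refine ⟨Walk.cons hadj p, ?_⟩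
      intro z hz
      rcases (by simpa using hz : z = w ∨ z ∈ p.support) with rfl | hzp
      · exact Or.inl rfl
      · rcases hp z hzp with rfl | h | h
        · exact Or.inr (Or.inr hvS)
        · exact Or.inr (Or.inl h)
        · exact Or.inr (Or.inr h)
    have hpw : ∀ a ∈ insert w X, ∀ b ∈ insert w X, JoinedOffSet G S a b := by
      intro a ha b hb
      rcases Set.mem_insert_iff.mp ha with rfl | haX
      · rcases Set.mem_insert_iff.mp hb with rfl | hbX
        · exact ⟨Walk.nil, by simp⟩
        · exact hjoin b hbX
      · rcases Set.mem_insert_iff.mp hb with rfl | hbX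
        · obtain ⟨p, hp⟩ := hjoin a haX
          refine ⟨p.reverse, ?_⟩
          intro z hz
          rw [Walk.support_reverse, List.mem_reverse] at hz
          rcases hp z hz with h | h | h
          · exact Or.inr (Or.inl h)
          · exact Or.inl h
          · exact Or.inr (Or.inr h)
        · exact hXpair a haX b hbX
    have hins := hXmax (insert w X) (Set.subset_insert _ _) hpw
    rw [← hins]
    exact Set.mem_insert _ _
  set C : Set V := X \ S with hC
  have hCC : ∀ {v u : V}, v ∈ C → G.Adj v u → u ∉ S → u ∈ C :=
    fun hv hadj huS => ⟨hclosure _ _ hadj.symm hv.1 hv.2, huS⟩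
  have hstayC : ∀ {a b : V} (p : G.Walk a b), a ∈ C → (∀ y ∈ p.support, y ∉ S) →
      ∀ y ∈ p.support, y ∈ C := by
    intro a b p
    induction p with
    | nil =>
      intro ha _ y hy
      simp only [Walk.support_nil, List.mem_singleton] at hy
      subst hy; exact ha
    | @cons aa vv bb hadj p ih =>
      intro ha hS' y hy
      have hvC : vv ∈ C := hCC ha hadj (hS' vv (by simp))
      rcases (by simpa using hy : y = aa ∨ y ∈ p.support) with rfl | hyp
      · exact ha
      · exact ih hvC (fun z hz => hS' z (by simp [hz])) y hyp
  have hCwalk : ∀ a ∈ C, ∀ b ∈ C, ∃ w : G.Walk a b, ∀ y ∈ w.support, y ∈ C := by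
    intro a ha b hb
    obtain ⟨p, hp⟩ := hXpair a ha.1 b hb.1
    have hS' : ∀ y ∈ p.support, y ∉ S := by
      intro y hy
      rcases hp y hy with rfl | rfl | h
      · exact ha.2
      · exact hb.2
      · exact h
    exact ⟨p, hstayC p ha hS'⟩
  -- decompose S
  have hSfin : S.Finite := Set.toFinite _
  have hS2 : (S \ {x}).ncard = 2 := by
    have h1 := Set.ncard_diff_singleton_add_one hx hSfin
    omega
  obtain ⟨s1, s2, hs12, hSx⟩ := Set.ncard_eq_two.mp hS2
  have hs1m : s1 ∈ S \ {x} := by rw [hSx]; exact Set.mem_insert _ _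
  have hs2m : s2 ∈ S \ {x} := by rw [hSx]; exact Set.mem_insert_of_mem _ rfl
  have hs1S : s1 ∈ S := hs1m.1
  have hs2S : s2 ∈ S := hs2m.1
  have hs1x : s1 ≠ x := by simpa using hs1m.2
  have hs2x : s2 ≠ x := by simpa using hs2m.2
  have hSmem : ∀ z ∈ S, z = x ∨ z = s1 ∨ z = s2 := by
    intro z hz
    by_cases hzx : z = x
    · exact Or.inl hzx
    · have hmem : z ∈ S \ {x} := ⟨hz, by simpa using hzx⟩
      rw [hSx] at hmem
      simpa using Or.inr hmem
  -- two neighbours of x in C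
  have hnbr1 : 1 < ((G.neighborSet x) ∩ C).ncard := by omega
  obtain ⟨a1, a2, ha1, ha2, ha12⟩ := (Set.one_lt_ncard_iff (Set.toFinite _)).mp hnbr1
  have ha1adj : G.Adj x a1 := ha1.1
  have ha2adj : G.Adj x a2 := ha2.1
  have ha1C : a1 ∈ C := ha1.2
  have ha2C : a2 ∈ C := ha2.2
  have hxX : x ∈ X := hclosure x a1 ha1adj ha1C.1 ha1C.2
  -- a vertex outside X ∪ S
  have hz0 : ∃ z0, z0 ∉ S ∧ z0 ∉ X := by
    by_contra hcon
    push_neg at hcon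
    apply hsep
    rw [connected_iff]
    constructor
    · rintro ⟨a, haS⟩ ⟨b, hbS⟩
      have haC : a ∈ C := ⟨hcon a haS, haS⟩
      have hbC : b ∈ C := ⟨hcon b hbS, hbS⟩
      obtain ⟨w, hw⟩ := hCwalk a haC b hbC
      exact reachable_induce w (fun y hy => (hw y hy).2) haS hbS
    · exact ⟨⟨a1, ha1C.2⟩⟩
  -- every vertex of S has a neighbour in C
  have hneigh : ∀ s ∈ S, ∃ vv, vv ∈ C ∧ G.Adj s vv := by
    intro s hs
    by_contra hno
    push_neg at hno
    obtain ⟨z0, hz0S, hz0X⟩ := hz0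
    have hcard2 : (S \ {s}).ncard ≤ 2 := by
      have h1 := Set.ncard_diff_singleton_add_one hs hSfin
      omega
    have hconn := h3cut (S \ {s}) hcard2
    have ha1mem : a1 ∈ (S \ {s})ᶜ := by
      rw [Set.mem_compl_iff, Set.mem_diff]
      exact fun hc => ha1C.2 hc.1
    have hz0mem : z0 ∈ (S \ {s})ᶜ := by
      rw [Set.mem_compl_iff, Set.mem_diff]
      exact fun hc => hz0S hc.1
    obtain ⟨w, hw⟩ := walk_of_induce ha1mem hz0mem (hconn.preconnected _ _)
    obtain ⟨pp, qq, hadj, hpC, hqC, hpm, hqm⟩ :=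
      exists_boundary w C ha1C (fun hc => hz0X hc.1)
    have hqS : qq ∈ S := by
      by_contra hqS'
      exact hqC ⟨hclosure qq pp hadj.symm hpC.1 hpC.2, hqS'⟩
    have hqs : qq = s := by
      have h' := hw qq hqm
      rw [Set.mem_compl_iff, Set.mem_diff] at h'
      push_neg at h'
      simpa using h' hqS
    exact hno pp hpC (hqs ▸ hadj.symm)
  obtain ⟨u1, hu1C, hu1adj⟩ := hneigh s1 hs1S
  obtain ⟨u2, hu2C, hu2adj⟩ := hneigh s2 hs2S
  -- build P
  obtain ⟨w12, hw12⟩ := hCwalk u1 hu1C u2 hu2C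
  set wP : G.Walk s1 s2 :=
    Walk.cons hu1adj (w12.append (Walk.cons hu2adj.symm Walk.nil)) with hwP
  set P : G.Walk s1 s2 := wP.bypass with hP
  have hPpath : P.IsPath := wP.bypass_isPath
  have hPcases : ∀ y ∈ P.support, y = s1 ∨ y = s2 ∨ y ∈ C := by
    intro y hy
    have h0 : y ∈ wP.support := wP.support_bypass_subset hy
    rw [hwP] at h0
    simp only [Walk.support_cons, List.mem_cons] at h0
    rcases h0 with rfl | h0
    · exact Or.inl rfl
    · rw [Walk.mem_support_append_iff] at h0
      rcases h0 with h0 | h0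
      · exact Or.inr (Or.inr (hw12 y h0))
      · have h2 : y = u2 ∨ y = s2 := by simpa using h0
        rcases h2 with rfl | rfl
        · exact Or.inr (Or.inr hu2C)
        · exact Or.inr (Or.inl rfl)
  have hs1X : s1 ∈ X := hclosure _ _ hu1adj hu1C.1 hu1C.2
  have hs2X : s2 ∈ X := hclosure _ _ hu2adj hu2C.1 hu2C.2
  have hPX : ∀ y ∈ P.support, y ∈ X := by
    intro y hy
    rcases hPcases y hy with rfl | rfl | h
    · exact hs1X
    · exact hs2X
    · exact h.1
  have hPoffS : ∀ y ∈ P.support, y = s1 ∨ y = s2 ∨ y ∉ S := by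
    intro y hy
    rcases hPcases y hy with rfl | rfl | h
    · exact Or.inl rfl
    · exact Or.inr (Or.inl rfl)
    · exact Or.inr (Or.inr h.2)
  have hxP : x ∉ P.support := by
    intro hc
    rcases hPcases x hc with h | h | h
    · exact hs1x h.symm
    · exact hs2x h.symm
    · exact h.2 hx
  -- fan setup
  set T : Set V := {yy | yy ∈ P.support} with hT
  have hs1T : s1 ∈ T := P.start_mem_support
  have hs2T : s2 ∈ T := P.end_mem_support
  set D : Set V := C \ T with hD
  set Wf : Set V := D ∪ T with hWf
  have hxWf : x ∉ Wf := by
    rintro (h | h)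
    · exact h.1.2 hx
    · exact hxP h
  have hWfX : ∀ y ∈ Wf, y ∈ X := by
    rintro y (h | h)
    · exact h.1.1
    · exact hPX y h
  set Γf : SimpleGraph V := Gres G Wf with hΓf
  set Af : Set V := {vv | G.Adj x vv ∧ vv ∈ Wf} with hAf
  -- avoidance paths
  have havoid : ∀ c : V, c ≠ x → ∃ aa q, ∃ wf : Γf.Walk aa q, aa ∈ Af ∧ q ∈ T ∧
      (∀ y ∈ wf.support, y ≠ c ∧ y ≠ x) := by
    intro c hcx
    obtain ⟨aa, haaAdj, haaC, haac⟩ : ∃ aa, G.Adj x aa ∧ aa ∈ C ∧ aa ≠ c := by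
      by_cases h1 : a1 = c
      · exact ⟨a2, ha2adj, ha2C, fun hc => ha12 (h1.trans hc.symm)⟩
      · exact ⟨a1, ha1adj, ha1C, h1⟩
    obtain ⟨tt, httT, httx, httc⟩ : ∃ tt, tt ∈ T ∧ tt ≠ x ∧ tt ≠ c := by
      by_cases h1 : s1 = c
      · exact ⟨s2, hs2T, hs2x, fun hc => hs12 (hc.trans h1.symm).symm⟩
      · exact ⟨s1, hs1T, hs1x, h1⟩
    have hcard2 : ({x, c} : Set V).ncard ≤ 2 :=
      (Set.ncard_insert_le _ _).trans (by simp)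
    have hconn := h3cut {x, c} hcard2
    have haax : aa ≠ x := fun h => haaC.2 (h ▸ hx)
    have haamem : aa ∈ ({x, c} : Set V)ᶜ := by
      simp only [Set.mem_compl_iff, Set.mem_insert_iff, Set.mem_singleton_iff]
      push_neg
      exact ⟨haax, haac⟩
    have httmem : tt ∈ ({x, c} : Set V)ᶜ := by
      simp only [Set.mem_compl_iff, Set.mem_insert_iff, Set.mem_singleton_iff]
      push_neg
      exact ⟨httx, httc⟩
    obtain ⟨w0, hw0⟩ := walk_of_induce haamem httmem (hconn.preconnected _ _)
    obtain ⟨w1, hw1s⟩ := toGres w0 hw0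
    have hclose2 : ∀ vv ∈ C, ∀ uu, (Gres G ({x, c} : Set V)ᶜ).Adj vv uu → uu ∉ T →
        uu ∈ C := by
      intro vv hvv uu hadj huT
      have hux : uu ≠ x := by
        have h1 := (show G.Adj vv uu ∧ vv ∈ ({x, c} : Set V)ᶜ ∧ uu ∈ ({x, c} : Set V)ᶜ from hadj).2.2
        simp only [Set.mem_compl_iff, Set.mem_insert_iff, Set.mem_singleton_iff] at h1
        push_neg at h1
        exact h1.1
      have huS : uu ∉ S := by
        intro hS'
        rcases hSmem uu hS' with rfl | rfl | rfl
        · exact hux rfl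
        · exact huT hs1T
        · exact huT hs2T
      exact hCC hvv (show G.Adj vv uu ∧ vv ∈ ({x, c} : Set V)ᶜ ∧ uu ∈ ({x, c} : Set V)ᶜ from hadj).1 huS
    obtain ⟨q, w2, hqT, hw2sub, hw2CT⟩ := walkStay hclose2 w1 haaC httT
    obtain ⟨w3, hw3s, -⟩ := leWalk gres_le w2
    have hw3W : ∀ y ∈ w3.support, y ∈ Wf := by
      intro y hy
      rw [hw3s] at hy
      by_cases hyq : y = q
      · subst hyq; exact Or.inr hqT
      · exact Or.inl ⟨(hw2CT y hy hyq).1, (hw2CT y hy hyq).2⟩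
    obtain ⟨wf, hwfs⟩ := toGres w3 hw3W
    refine ⟨aa, q, wf, ⟨haaAdj, hw3W aa w3.start_mem_support⟩, hqT, ?_⟩
    intro y hy
    rw [hwfs, hw3s] at hy
    have hy0 : y ∈ w0.support := by rw [← hw1s]; exact hw2sub y hy
    have h1 := hw0 y hy0
    simp only [Set.mem_compl_iff, Set.mem_insert_iff, Set.mem_singleton_iff] at h1
    push_neg at h1
    exact ⟨h1.2, h1.1⟩
  -- Menger hypothesis
  have hsepf : ∀ Z, MSep Γf Af T Z → 2 ≤ Z.ncard := by
    intro Z hZ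
    by_contra hlt
    push_neg at hlt
    rcases Z.eq_empty_or_nonempty with rfl | ⟨z0, hz0'⟩
    · obtain ⟨aa, q, wf, haa, hqT, hav⟩ := havoid s1 hs1x
      obtain ⟨z, hz1, -⟩ := hZ aa haa q hqT wf
      exact absurd hz1 (Set.notMem_empty z)
    · have hZsingle : Z = {z0} := by
        apply Set.eq_singleton_iff_unique_mem.mpr
        refine ⟨hz0', fun z hz => ?_⟩
        by_contra hne
        have h1 : 1 < Z.ncard :=
          (Set.one_lt_ncard_iff (Set.toFinite _)).mpr ⟨z, z0, hz, hz0', hne⟩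
        omega
      by_cases hz0x : z0 = x
      · obtain ⟨aa, q, wf, haa, hqT, hav⟩ := havoid s1 hs1x
        obtain ⟨z, hz1, hz2⟩ := hZ aa haa q hqT wf
        rw [hZsingle, Set.mem_singleton_iff] at hz1
        subst hz1
        exact (hav z hz2).2 hz0x
      · obtain ⟨aa, q, wf, haa, hqT, hav⟩ := havoid z0 hz0x
        obtain ⟨z, hz1, hz2⟩ := hZ aa haa q hqT wf
        rw [hZsingle, Set.mem_singleton_iff] at hz1
        exact (hav z hz2).1 hz1
  obtain ⟨aa1, b1, aa2, b2, p1, p2, haa1, hb1, haa2, hb2, hp1, hp2, -, hp1B, -,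
    hp2B, hdisj⟩ := menger2 Γf Af T hsepf
  obtain ⟨pg1, hpg1s, hpg1p⟩ := leWalk gres_le p1
  obtain ⟨pg2, hpg2s, hpg2p⟩ := leWalk gres_le p2
  have hp1W : ∀ y ∈ p1.support, y ∈ Wf := gres_support p1 haa1.2
  have hp2W : ∀ y ∈ p2.support, y ∈ Wf := gres_support p2 haa2.2
  have hxp1 : x ∉ pg1.support := by
    rw [hpg1s]; exact fun hc => hxWf (hp1W x hc)
  have hxp2 : x ∉ pg2.support := by
    rw [hpg2s]; exact fun hc => hxWf (hp2W x hc)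
  refine ⟨s1, s2, P, hs1S, hs2S, hPpath, hPX, hPoffS, hxP, b1, b2,
    Walk.cons haa1.1 pg1, Walk.cons haa2.1 pg2, hb1, hb2, ?_, ?_, ?_, ?_, ?_, ?_, ?_, ?_⟩
  · -- b1 ≠ b2
    intro hc
    have h1 : b1 ∈ p2.support := by rw [hc]; exact p2.end_mem_support
    exact hdisj b1 p1.end_mem_support h1
  · rw [Walk.cons_isPath_iff]; exact ⟨hpg1p hp1, hxp1⟩
  · rw [Walk.cons_isPath_iff]; exact ⟨hpg2p hp2, hxp2⟩
  · -- Q1 ⊆ X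
    intro y hy
    rcases (by simpa using hy : y = x ∨ y ∈ pg1.support) with rfl | hyp
    · exact hxX
    · rw [hpg1s] at hyp
      exact hWfX y (hp1W y hyp)
  · intro y hy
    rcases (by simpa using hy : y = x ∨ y ∈ pg2.support) with rfl | hyp
    · exact hxX
    · rw [hpg2s] at hyp
      exact hWfX y (hp2W y hyp)
  · -- meet only at x
    intro y hy1 hy2
    rcases (by simpa using hy1 : y = x ∨ y ∈ pg1.support) with rfl | hyp1
    · rfl
    · rcases (by simpa using hy2 : y = x ∨ y ∈ pg2.support) with rfl | hyp2
      · rfl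
      · rw [hpg1s] at hyp1
        rw [hpg2s] at hyp2
        exact absurd hyp2 (hdisj y hyp1)
  · -- Q1 meets P only at b1
    intro y hy hyP
    rcases (by simpa using hy : y = x ∨ y ∈ pg1.support) with rfl | hyp
    · exact absurd hyP hxP
    · rw [hpg1s] at hyp
      exact hp1B y hyp hyP
  · intro y hy hyP
    rcases (by simpa using hy : y = x ∨ y ∈ pg2.support) with rfl | hyp
    · exact absurd hyP hxP
    · rw [hpg2s] at hyp
      exact hp2B y hyp hyP
end

section
/- Let k ≥ 7, let G be a graph, let S be a separating set of G with |S| = 4, and let v0 ∈ S. Suppose that every bridge of G|S contains at most one neighbour of v0 not in S. Then G contains no subdivision of the wheel W_k centred on v0. -/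
open SimpleGraph

universe u v

section helpers

/-! ### Conn and bridges -/

def Conn {V : Type u} (G : SimpleGraph V) (S : Set V) (a b : V) : Prop :=
  ∃ p : G.Walk a b, ∀ z ∈ p.support, z ∉ S

lemma Conn.symm {V : Type u} {G : SimpleGraph V} {S : Set V} {a b : V}
    (h : Conn G S a b) : Conn G S b a := by
  obtain ⟨p, hp⟩ := h
  exact ⟨p.reverse, fun z hz => hp z (by simpa using hz)⟩

lemma Conn.trans {V : Type u} {G : SimpleGraph V} {S : Set V} {a b c : V}
    (h : Conn G S a b) (h' : Conn G S b c) : Conn G S a c := by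
  obtain ⟨p, hp⟩ := h; obtain ⟨q, hq⟩ := h'
  refine ⟨p.append q, fun z hz => ?_⟩
  rcases (SimpleGraph.Walk.mem_support_append_iff _ _).1 hz with h | h
  exacts [hp z h, hq z h]

lemma Conn.refl {V : Type u} {G : SimpleGraph V} {S : Set V} {a : V}
    (ha : a ∉ S) : Conn G S a a :=
  ⟨SimpleGraph.Walk.nil, by simp [ha]⟩

lemma bridge_contra {V : Type u} [Fintype V] {G : SimpleGraph V} {S : Set V} {v0 x y : V}
    (hnbr : ∀ U : Set V, IsBridgeOf G S U → ((G.neighborSet v0) ∩ (U \ S)).ncard ≤ 1)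
    (hx : G.Adj v0 x) (hy : G.Adj v0 y) (hxy : x ≠ y)
    (hxS : x ∉ S) (hyS : y ∉ S) (hconn : Conn G S x y) : False := by
  classical
  set C : Set V := {z | Conn G S x z} with hC
  have hCpair : ∀ a ∈ C, ∀ b ∈ C, JoinedOffSet G S a b := by
    intro a ha b hb
    obtain ⟨p, hp⟩ := (Conn.symm ha).trans hb
    exact ⟨p, fun z hz => Or.inr (Or.inr (hp z hz))⟩
  set 𝒞 : Set (Set V) := {U | C ⊆ U ∧ ∀ a ∈ U, ∀ b ∈ U, JoinedOffSet G S a b} with h𝒞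
  have hne : 𝒞.Nonempty := ⟨C, subset_rfl, hCpair⟩
  obtain ⟨U, hU, hUmax⟩ := Set.Finite.exists_maximalFor id 𝒞 (Set.toFinite 𝒞) hne
  have hbridge : IsBridgeOf G S U := by
    refine ⟨⟨x, hU.1 (Conn.refl hxS)⟩, hU.2, ?_⟩
    intro U' hsub hprop
    exact Set.Subset.antisymm (hUmax ⟨hU.1.trans hsub, hprop⟩ hsub) hsub
  have hsub : {x, y} ⊆ (G.neighborSet v0) ∩ (U \ S) := by
    intro z hz
    rcases hz with rfl | hz
    · exact ⟨hx, hU.1 (Conn.refl hxS), hxS⟩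
    · rcases hz with rfl
      exact ⟨hy, hU.1 hconn, hyS⟩
  have h2 : (2 : ℕ) ≤ ((G.neighborSet v0) ∩ (U \ S)).ncard := by
    have := Set.ncard_le_ncard hsub (Set.toFinite _)
    rwa [Set.ncard_pair hxy] at this
  exact absurd (hnbr U hbridge) (by omega)

/-! ### path neighbour counting -/

variable {V : Type u} [Fintype V] {G : SimpleGraph V}

omit [Fintype V] in
lemma start_edge_unique {u v y z : V} (p : G.Walk u v) (hp : p.IsPath)
    (hy : s(u, y) ∈ p.edges) (hz : s(u, z) ∈ p.edges) : y = z := by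
  cases p with
  | nil => simp at hy
  | @cons _ b _ h q =>
    rw [SimpleGraph.Walk.cons_isPath_iff] at hp
    have key : ∀ w, s(u, w) ∈ (SimpleGraph.Walk.cons h q).edges → w = b := by
      intro w hw
      rw [SimpleGraph.Walk.edges_cons, List.mem_cons] at hw
      rcases hw with hw | hw
      · rcases Sym2.eq_iff.1 hw with ⟨-, rfl⟩ | ⟨h1, rfl⟩
        · rfl
        · exact absurd h1 h.ne
      · exact absurd (q.fst_mem_support_of_mem_edges hw) hp.2
    rw [key y hy, key z hz]

omit [Fintype V] in
lemma start_edge_subsingleton {u v : V} (p : G.Walk u v) (hp : p.IsPath) :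
    {y | s(u, y) ∈ p.edges}.Subsingleton := fun _ hy _ hz =>
  start_edge_unique p hp hy hz

omit [Fintype V] in
lemma end_edge_subsingleton {u v : V} (p : G.Walk u v) (hp : p.IsPath) :
    {y | s(v, y) ∈ p.edges}.Subsingleton := by
  intro y hy z hz
  refine start_edge_unique p.reverse hp.reverse ?_ ?_ <;>
    simpa [SimpleGraph.Walk.edges_reverse] using ‹_›

lemma subsingleton_ncard_le_one {s : Set V} (h : s.Subsingleton) : s.ncard ≤ 1 :=
  (Set.ncard_le_one (Set.toFinite s)).2 fun _ ha _ hb => h ha hb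

lemma path_nbrs_ncard_le_two {u v : V} (p : G.Walk u v) (hp : p.IsPath) (x : V) :
    {y | s(x, y) ∈ p.edges}.ncard ≤ 2 := by
  classical
  by_cases hx : x ∈ p.support
  · have hspec := p.take_spec hx
    have hsub : {y | s(x, y) ∈ p.edges} ⊆
        {y | s(x, y) ∈ (p.takeUntil x hx).edges} ∪ {y | s(x, y) ∈ (p.dropUntil x hx).edges} := by
      intro y hy
      have : s(x, y) ∈ ((p.takeUntil x hx).append (p.dropUntil x hx)).edges := by
        rw [hspec]; exact hy
      rw [SimpleGraph.Walk.edges_append, List.mem_append] at this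
      exact this
    calc {y | s(x, y) ∈ p.edges}.ncard
        ≤ _ := Set.ncard_le_ncard hsub (Set.toFinite _)
      _ ≤ _ := Set.ncard_union_le _ _
      _ ≤ 2 := by
          have h1 := subsingleton_ncard_le_one (end_edge_subsingleton _ (hp.takeUntil hx))
          have h2 := subsingleton_ncard_le_one (start_edge_subsingleton _ (hp.dropUntil hx))
          omega
  · have : {y | s(x, y) ∈ p.edges} = ∅ := by
      ext y; simp only [Set.mem_setOf_eq, Set.mem_empty_iff_false, iff_false]
      exact fun hy => hx (p.fst_mem_support_of_mem_edges hy)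
    simp [this]

end helpers

section cyclemma

open Fin.NatCast in
lemma cyc {k : ℕ} [NeZero k] (hk : 7 ≤ k) (r : Fin k → Fin k → Prop)
    (hsymm : ∀ i j, r i j → r j i) (htrans : ∀ i j l, r i j → r j l → r i l)
    (T1 T2 D : Finset (Fin k))
    (hrefl : ∀ i, i ∉ T1 → r i i)
    (hcard : T1.card + T2.card + D.card ≤ 3)
    (hgood : ∀ j, j ∉ D → j ∉ T1 → j + 1 ∉ T1 → r j (j + 1))
    (hpair : ∀ i j, i ∉ T1 → i ∉ T2 → j ∉ T1 → j ∉ T2 → i ≠ j → ¬ r i j) : False := by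
  classical
  set U : Finset (Fin k) := Finset.univ \ (T1 ∪ T2) with hU
  have hUcard : 4 ≤ U.card := by
    have h1 : (T1 ∪ T2).card ≤ 3 := le_trans (Finset.card_union_le _ _) (by omega)
    have h2 : U.card = k - (T1 ∪ T2).card := by
      rw [hU, Finset.card_sdiff_of_subset (Finset.subset_univ _), Finset.card_univ, Fintype.card_fin]
    omega
  have hUmem : ∀ u ∈ U, u ∉ T1 ∧ u ∉ T2 := by
    intro u hu
    rw [hU, Finset.mem_sdiff, Finset.mem_union] at hu
    tauto
  have chain : ∀ u : Fin k, u ∉ T1 → ∀ s : ℕ,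
      (∀ t < s, ¬((u + (t : Fin k)) ∈ D ∨ (u + (t : Fin k)) + 1 ∈ T1)) →
      r u (u + (s : Fin k)) ∧ (u + (s : Fin k)) ∉ T1 := by
    intro u hu s
    induction s with
    | zero => intro _; simpa using ⟨hrefl u hu, hu⟩
    | succ n ih =>
      intro hno
      obtain ⟨hr, hT⟩ := ih (fun t ht => hno t (by omega))
      have hcut := hno n (by omega)
      push_neg at hcut
      have hstep := hgood (u + (n : Fin k)) hcut.1 hT hcut.2
      have hcast : ((n + 1 : ℕ) : Fin k) = (n : Fin k) + 1 := by push_cast; ring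
      rw [hcast, ← add_assoc]
      exact ⟨htrans _ _ _ hr hstep, hcut.2⟩
  by_cases hempty : D = ∅ ∧ T1 = ∅
  · obtain ⟨u, hu, u', hu', hne⟩ := Finset.one_lt_card.1 (by omega : 1 < U.card)
    have hr : r u u' := by
      have := (chain u (hUmem u hu).1 ((u' - u).val)
        (fun t _ => by simp [hempty.1, hempty.2])).1
      rwa [Fin.cast_val_eq_self, add_sub_cancel] at this
    exact hpair u u' (hUmem u hu).1 (hUmem u hu).2 (hUmem u' hu').1 (hUmem u' hu').2 hne hr
  · have hex : ∀ u : Fin k, ∃ s : ℕ, (u + (s : Fin k)) ∈ D ∨ (u + (s : Fin k)) + 1 ∈ T1 := by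
      intro u
      rcases Finset.eq_empty_or_nonempty D with hD | ⟨j, hj⟩
      · rcases Finset.eq_empty_or_nonempty T1 with hT | ⟨m, hm⟩
        · exact absurd ⟨hD, hT⟩ hempty
        · refine ⟨((m - 1 - u).val), Or.inr ?_⟩
          rw [Fin.cast_val_eq_self, add_sub_cancel, sub_add_cancel]
          exact hm
      · refine ⟨((j - u).val), Or.inl ?_⟩
        rw [Fin.cast_val_eq_self, add_sub_cancel]
        exact hj
    let g : Fin k → ℕ := fun u => Nat.find (hex u)
    let ob : Fin k → Fin k × Bool := fun u =>
      if (u + (g u : Fin k)) ∈ D then (u + (g u : Fin k), true) else (u + (g u : Fin k) + 1, false)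
    have hmaps : ∀ u ∈ U, ob u ∈ D.image (·, true) ∪ T1.image (·, false) := by
      intro u _
      by_cases hD : (u + (g u : Fin k)) ∈ D
      · simp only [ob, if_pos hD, Finset.mem_union, Finset.mem_image]
        exact Or.inl ⟨_, hD, rfl⟩
      · have := Nat.find_spec (hex u)
        simp only [ob, if_neg hD, Finset.mem_union, Finset.mem_image]
        exact Or.inr ⟨_, this.resolve_left hD, rfl⟩
    have hcard2 : (D.image (·, true) ∪ T1.image (·, false)).card < U.card := by
      calc (D.image (·, true) ∪ T1.image (·, false)).card
          ≤ _ := Finset.card_union_le _ _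
        _ ≤ D.card + T1.card := by
            gcongr <;> exact Finset.card_image_le
        _ < 4 := by omega
        _ ≤ U.card := hUcard
    obtain ⟨u, hu, u', hu', hne, heq⟩ :=
      Finset.exists_ne_map_eq_of_card_lt_of_maps_to hcard2 hmaps
    have hreach : ∀ w : Fin k, w ∈ U → r w (w + (g w : Fin k)) :=
      fun w hw => (chain w (hUmem w hw).1 (g w) (fun t ht => Nat.find_min (hex w) ht)).1
    have hsame : u + (g u : Fin k) = u' + (g u' : Fin k) := by
      by_cases h1 : (u + (g u : Fin k)) ∈ D <;> by_cases h2 : (u' + (g u' : Fin k)) ∈ D <;>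
        simp only [ob, if_pos, if_neg, h1, h2, if_true, if_false, Prod.mk.injEq] at heq <;>
        first
          | exact heq.1
          | (exact add_right_cancel heq.1)
          | simp at heq
    have hr : r u u' :=
      htrans _ _ _ (hreach u hu) (by rw [hsame]; exact hsymm _ _ (hreach u' hu'))
    exact hpair u u' (hUmem u hu).1 (hUmem u hu).2 (hUmem u' hu').1 (hUmem u' hu').2 hne hr

end cyclemma

section wheelfacts

variable {k : ℕ} [NeZero k]

lemma wheel_hub_adj (i : Fin k) : (wheel k).Adj (Fin.last k) i.castSucc := by
  rw [wheel, SimpleGraph.fromRel_adj]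
  refine ⟨?_, Or.inl (Or.inl rfl)⟩
  intro h
  have := congrArg Fin.val h
  simp only [Fin.val_last, Fin.coe_castSucc] at this
  omega

lemma wheel_rim_adj (hk : 7 ≤ k) (i : Fin k) :
    (wheel k).Adj i.castSucc (i + 1).castSucc := by
  have hval : ((i + 1 : Fin k)).val = (i.val + 1) % k := by
    rw [Fin.add_def]
    congr 1
    simp [Nat.mod_eq_of_lt (show 1 < k by omega)]
  rw [wheel, SimpleGraph.fromRel_adj]
  constructor
  · intro h
    have := congrArg Fin.val h
    simp only [Fin.coe_castSucc, hval] at this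
    rcases Nat.lt_or_ge (i.val + 1) k with h' | h'
    · rw [Nat.mod_eq_of_lt h'] at this; omega
    · have h2 : i.val + 1 = k := by omega
      rw [h2, Nat.mod_self] at this
      omega
  · exact Or.inl (Or.inr (Or.inr ⟨i.isLt, by
      rw [Fin.coe_castSucc, hval]; exact Nat.mod_lt _ (by omega), by
      simp [Fin.coe_castSucc, hval]⟩))

lemma wheel_adj_of_rim (hk : 7 ≤ k) {i : Fin k} {b : Fin (k+1)}
    (h : (wheel k).Adj i.castSucc b) :
    b = Fin.last k ∨ b = (i + 1).castSucc ∨ b = (i - 1).castSucc := by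
  have hval1 : ((i + 1 : Fin k)).val = (i.val + 1) % k := by
    rw [Fin.add_def]; congr 1; simp [Nat.mod_eq_of_lt (show 1 < k by omega)]
  have hvalm : ((i - 1 : Fin k)).val = (k - 1 + i.val) % k := by
    have h1 : (1 : Fin k).val = 1 := by simp [Nat.mod_eq_of_lt (show 1 < k by omega)]
    rw [Fin.sub_def]
    simp only [h1, Fin.val_mk]
  rw [wheel, SimpleGraph.fromRel_adj] at h
  obtain ⟨hne, h⟩ := h
  have hi : (i.castSucc).val = i.val := rfl
  rcases h with (h | h | ⟨_, hb, hrel⟩) | (h | h | ⟨hb, _, hrel⟩)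
  · exfalso; rw [hi] at h; exact absurd h (by omega)
  · left; exact Fin.ext (by simpa using h)
  · right; left
    refine Fin.ext ?_
    rw [Fin.coe_castSucc, hval1, ← hrel, hi]
  · left; exact Fin.ext (by simpa using h)
  · exfalso; rw [hi] at h; exact absurd h (by omega)
  · right; right
    refine Fin.ext ?_
    rw [Fin.coe_castSucc, hvalm]
    rw [hi] at hrel
    rcases Nat.lt_or_ge (b.val + 1) k with h' | h'
    · rw [Nat.mod_eq_of_lt h'] at hrel
      have he : k - 1 + i.val = b.val + k := by omega
      rw [he, Nat.add_mod_right, Nat.mod_eq_of_lt (by omega)]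
    · have h2 : b.val + 1 = k := by omega
      rw [h2, Nat.mod_self] at hrel
      have hz : i.val = 0 := hrel.symm
      rw [hz]
      have : (k - 1 + 0) % k = k - 1 := by
        rw [Nat.add_zero]; exact Nat.mod_eq_of_lt (by omega)
      omega

lemma castSucc_ne_last (i : Fin k) : i.castSucc ≠ Fin.last k := by
  intro h
  have := congrArg Fin.val h
  simp only [Fin.coe_castSucc, Fin.val_last] at this
  omega

lemma fin_no_two_cycle (hk : 7 ≤ k) {i j : Fin k} (h1 : i = j + 1) (h2 : j = i + 1) : False := by
  have hval : ∀ m : Fin k, ((m + 1 : Fin k)).val = (m.val + 1) % k := by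
    intro m
    rw [Fin.add_def]; congr 1; simp [Nat.mod_eq_of_lt (show 1 < k by omega)]
  have e1 : i.val = (j.val + 1) % k := by rw [h1, hval]
  have e2 : j.val = (i.val + 1) % k := by rw [h2, hval]
  have hik : i.val < k := i.isLt
  have hjk : j.val < k := j.isLt
  rcases Nat.lt_or_ge (j.val + 1) k with h' | h'
  · rw [Nat.mod_eq_of_lt h'] at e1
    rcases Nat.lt_or_ge (i.val + 1) k with h'' | h''
    · rw [Nat.mod_eq_of_lt h''] at e2; omega
    · have : i.val + 1 = k := by omega
      rw [this, Nat.mod_self] at e2; omega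
  · have : j.val + 1 = k := by omega
    rw [this, Nat.mod_self] at e1
    rcases Nat.lt_or_ge (i.val + 1) k with h'' | h''
    · rw [Nat.mod_eq_of_lt h''] at e2; omega
    · have h3 : i.val + 1 = k := by omega
      rw [h3, Nat.mod_self] at e2; omega

end wheelfacts

/-- If every bridge of `G|S` (with `|S| = 4`, `v0 ∈ S`) contains at most one neighbour
of `v0` outside `S`, then `G` has no `W_k`-subdivision (`k ≥ 7`) centred on `v0`. -/
theorem stmt4 {V : Type u} [Fintype V] (G : SimpleGraph V) (k : ℕ) (hk : 7 ≤ k)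
    (S : Set V) (v0 : V)
    (hsep : IsSeparating G S) (hS : S.ncard = 4) (hv0 : v0 ∈ S)
    (hnbr : ∀ U : Set V, IsBridgeOf G S U → ((G.neighborSet v0) ∩ (U \ S)).ncard ≤ 1) :
    ¬ ContainsWheelCenteredOn G k v0 := by
  classical
  haveI : NeZero k := ⟨by omega⟩
  rintro ⟨H, hHG, ⟨f, finj, P, hpath, hint, hdisj, hsupp, hedge⟩, hdeg⟩
  rw [degN] at hdeg
  set hub : Fin (k + 1) := Fin.last k with hhub
  set c : Fin k → Fin (k + 1) := Fin.castSucc with hc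
  -- basic facts
  have hinter : ∀ a b (h : (wheel k).Adj a b) x, x ∈ (P a b h).support →
      x ∈ Set.range f → x = f a ∨ x = f b := by
    intro a b h x hx hr
    by_contra hcon
    push_neg at hcon
    exact hint a b h x hx hcon.1 hcon.2 hr
  -- edge of H at x gives a path through x
  have hedge' : ∀ x y, H.Adj x y → ∃ a, ∃ b, ∃ h : (wheel k).Adj a b,
      s(x, y) ∈ (P a b h).edges := by
    intro x y hxy
    exact hedge _ (H.mem_edgeSet.2 hxy)
  ----------------------------------------------------------------
  -- Step 1 : v0 = f hub
  ----------------------------------------------------------------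
  have hv0f : v0 = f hub := by
    by_contra hne
    by_cases hrange : v0 ∈ Set.range f
    · -- v0 = f (c i) for some rim i
      obtain ⟨j, hj⟩ := hrange
      have hjne : j ≠ hub := fun h => hne (by rw [← hj, h])
      have hjlt : j.val < k := by
        have := j.isLt
        rcases Nat.lt_or_ge j.val k with h | h
        · exact h
        · exact absurd (Fin.ext (by simp [hhub]; omega) : j = hub) hjne
      set i : Fin k := ⟨j.val, hjlt⟩ with hi
      have hci : c i = j := Fin.ext rfl
      have hvci : v0 = f (c i) := by rw [hci, hj]
      have h1 : (wheel k).Adj (c i) hub := (wheel_hub_adj i).symm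
      have h2 : (wheel k).Adj (c i) (c (i + 1)) := wheel_rim_adj hk i
      have h3 : (wheel k).Adj (c i) (c (i - 1)) := by
        have h3' := wheel_rim_adj hk (i - 1)
        rw [sub_add_cancel] at h3'
        exact h3'.symm
      have hsubset : H.neighborSet v0 ⊆
          {y | s(v0, y) ∈ (P (c i) hub h1).edges} ∪
          {y | s(v0, y) ∈ (P (c i) (c (i+1)) h2).edges} ∪
          {y | s(v0, y) ∈ (P (c i) (c (i-1)) h3).edges} ∪
          {y | s(v0, y) ∈ (P hub (c i) h1.symm).edges} ∪
          {y | s(v0, y) ∈ (P (c (i+1)) (c i) h2.symm).edges} ∪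
          {y | s(v0, y) ∈ (P (c (i-1)) (c i) h3.symm).edges} := by
        intro y hy
        obtain ⟨a, b, h, he⟩ := hedge' v0 y hy
        have hsup : v0 ∈ (P a b h).support := (P a b h).fst_mem_support_of_mem_edges he
        rcases hinter a b h v0 hsup ⟨j, hj⟩ with hva | hvb
        · -- a = c i
          have ha : a = c i := finj (by rw [← hva, hvci])
          subst ha
          rcases wheel_adj_of_rim hk h with rfl | rfl | rfl
          · exact Or.inl (Or.inl (Or.inl (Or.inl (Or.inl he))))
          · exact Or.inl (Or.inl (Or.inl (Or.inl (Or.inr he))))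
          · exact Or.inl (Or.inl (Or.inl (Or.inr he)))
        · have hb : b = c i := finj (by rw [← hvb, hvci])
          subst hb
          rcases wheel_adj_of_rim hk h.symm with rfl | rfl | rfl
          · exact Or.inl (Or.inl (Or.inr he))
          · exact Or.inl (Or.inr he)
          · exact Or.inr he
      have hb1 : ∀ (a b : Fin (k+1)) (h : (wheel k).Adj a b), v0 = f a →
          {y | s(v0, y) ∈ (P a b h).edges}.ncard ≤ 1 := by
        intro a b h hv
        rw [hv]
        exact subsingleton_ncard_le_one (start_edge_subsingleton _ (hpath a b h))
      have hb2 : ∀ (a b : Fin (k+1)) (h : (wheel k).Adj a b), v0 = f b →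
          {y | s(v0, y) ∈ (P a b h).edges}.ncard ≤ 1 := by
        intro a b h hv
        rw [hv]
        exact subsingleton_ncard_le_one (end_edge_subsingleton _ (hpath a b h))
      have hcard := Set.ncard_le_ncard hsubset (Set.toFinite _)
      rw [hdeg] at hcard
      have c1 := hb1 _ _ h1 hvci
      have c2 := hb1 _ _ h2 hvci
      have c3 := hb1 _ _ h3 hvci
      have c4 := hb2 _ _ h1.symm hvci
      have c5 := hb2 _ _ h2.symm hvci
      have c6 := hb2 _ _ h3.symm hvci
      have hu1 := Set.ncard_union_le
        ({y | s(v0, y) ∈ (P (c i) hub h1).edges} ∪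
          {y | s(v0, y) ∈ (P (c i) (c (i+1)) h2).edges} ∪
          {y | s(v0, y) ∈ (P (c i) (c (i-1)) h3).edges} ∪
          {y | s(v0, y) ∈ (P hub (c i) h1.symm).edges} ∪
          {y | s(v0, y) ∈ (P (c (i+1)) (c i) h2.symm).edges})
        {y | s(v0, y) ∈ (P (c (i-1)) (c i) h3.symm).edges}
      have hu2 := Set.ncard_union_le
        ({y | s(v0, y) ∈ (P (c i) hub h1).edges} ∪
          {y | s(v0, y) ∈ (P (c i) (c (i+1)) h2).edges} ∪
          {y | s(v0, y) ∈ (P (c i) (c (i-1)) h3).edges} ∪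
          {y | s(v0, y) ∈ (P hub (c i) h1.symm).edges})
        {y | s(v0, y) ∈ (P (c (i+1)) (c i) h2.symm).edges}
      have hu3 := Set.ncard_union_le
        ({y | s(v0, y) ∈ (P (c i) hub h1).edges} ∪
          {y | s(v0, y) ∈ (P (c i) (c (i+1)) h2).edges} ∪
          {y | s(v0, y) ∈ (P (c i) (c (i-1)) h3).edges})
        {y | s(v0, y) ∈ (P hub (c i) h1.symm).edges}
      have hu4 := Set.ncard_union_le
        ({y | s(v0, y) ∈ (P (c i) hub h1).edges} ∪
          {y | s(v0, y) ∈ (P (c i) (c (i+1)) h2).edges})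
        {y | s(v0, y) ∈ (P (c i) (c (i-1)) h3).edges}
      have hu5 := Set.ncard_union_le
        {y | s(v0, y) ∈ (P (c i) hub h1).edges}
        {y | s(v0, y) ∈ (P (c i) (c (i+1)) h2).edges}
      omega
    · -- v0 not a branch vertex : at most 4 neighbours
      have hnonempty : (H.neighborSet v0).Nonempty :=
        Set.nonempty_of_ncard_ne_zero (by omega)
      obtain ⟨y0, hy0⟩ := hnonempty
      obtain ⟨a0, b0, h0, he0⟩ := hedge' v0 y0 hy0
      have hsup0 : v0 ∈ (P a0 b0 h0).support := (P a0 b0 h0).fst_mem_support_of_mem_edges he0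
      have hsubset : H.neighborSet v0 ⊆
          {y | s(v0, y) ∈ (P a0 b0 h0).edges} ∪
          {y | s(v0, y) ∈ (P b0 a0 h0.symm).edges} := by
        intro y hy
        obtain ⟨a, b, h, he⟩ := hedge' v0 y hy
        have hsup : v0 ∈ (P a b h).support := (P a b h).fst_mem_support_of_mem_edges he
        have hsame : s(a, b) = s(a0, b0) := by
          by_contra hne'
          rcases hdisj a b h a0 b0 h0 hne' v0 hsup hsup0 with ⟨hv, -⟩
          rcases hv with hv | hv
          · exact hrange ⟨a, hv.symm⟩
          · exact hrange ⟨b, hv.symm⟩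
        rcases Sym2.eq_iff.1 hsame with ⟨rfl, rfl⟩ | ⟨rfl, rfl⟩
        · exact Or.inl he
        · exact Or.inr he
      have hcard := Set.ncard_le_ncard hsubset (Set.toFinite _)
      rw [hdeg] at hcard
      have hu := Set.ncard_union_le
        {y | s(v0, y) ∈ (P a0 b0 h0).edges} {y | s(v0, y) ∈ (P b0 a0 h0.symm).edges}
      have d1 := path_nbrs_ncard_le_two _ (hpath a0 b0 h0) v0
      have d2 := path_nbrs_ncard_le_two _ (hpath b0 a0 h0.symm) v0
      omega
  
  ----------------------------------------------------------------
  -- Step 2 : spokes, rim paths, blocked classification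
  ----------------------------------------------------------------
  set S' : Set V := S \ {v0} with hS'
  have hS'card : S'.ncard = 3 := by
    rw [hS', Set.ncard_diff_singleton_of_mem hv0, hS]
  have hfhubS' : f hub ∉ S' := by rw [← hv0f]; simp [hS']
  set Q : ∀ i : Fin k, H.Walk (f hub) (f (c i)) :=
    fun i => P hub (c i) (wheel_hub_adj i) with hQdef
  set R : ∀ j : Fin k, H.Walk (f (c j)) (f (c (j + 1))) :=
    fun j => P (c j) (c (j+1)) (wheel_rim_adj hk j) with hRdef
  have hQpath : ∀ i, (Q i).IsPath := fun i => hpath _ _ _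
  -- Sym2 distinctness of wheel edges
  have hsne1 : ∀ i j : Fin k, i ≠ j → s(hub, c i) ≠ s(hub, c j) := by
    intro i j hij hcon
    rcases Sym2.eq_iff.1 hcon with ⟨-, h2⟩ | ⟨h1, -⟩
    · exact hij (Fin.castSucc_injective k h2)
    · exact castSucc_ne_last j h1.symm
  have hsne2 : ∀ i j : Fin k, s(hub, c i) ≠ s(c j, c (j+1)) := by
    intro i j hcon
    rcases Sym2.eq_iff.1 hcon with ⟨h1, -⟩ | ⟨h1, -⟩
    · exact castSucc_ne_last j h1.symm
    · exact castSucc_ne_last (j+1) h1.symm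
  have hsne3 : ∀ j j' : Fin k, j ≠ j' → s(c j, c (j+1)) ≠ s(c j', c (j'+1)) := by
    intro j j' hij hcon
    rcases Sym2.eq_iff.1 hcon with ⟨h1, -⟩ | ⟨h1, h2⟩
    · exact hij (Fin.castSucc_injective k h1)
    · exact fin_no_two_cycle hk (Fin.castSucc_injective k h1)
        ((Fin.castSucc_injective k h2).symm)
  -- support intersections
  have hQQ : ∀ i j : Fin k, i ≠ j → ∀ x, x ∈ (Q i).support → x ∈ (Q j).support →
      x = f hub := by
    intro i j hij x hxi hxj
    rcases hdisj hub (c i) _ hub (c j) _ (hsne1 i j hij) x hxi hxj with ⟨h1, h2⟩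
    rcases h1 with h1 | h1
    · exact h1
    · rcases h2 with h2 | h2
      · exact h2
      · exact absurd (Fin.castSucc_injective k (finj (h1.symm.trans h2))) hij
  have hQR : ∀ m j : Fin k, ∀ x, x ∈ (Q m).support → x ∈ (R j).support →
      x ≠ f hub → x = f (c m) ∧ (m = j ∨ m = j + 1) := by
    intro m j x hxm hxj hxhub
    rcases hdisj hub (c m) _ (c j) (c (j+1)) _ (hsne2 m j) x hxm hxj with ⟨h1, h2⟩
    have hxm' : x = f (c m) := h1.resolve_left hxhub
    refine ⟨hxm', ?_⟩
    rcases h2 with h2 | h2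
    · exact Or.inl (Fin.castSucc_injective k (finj (hxm'.symm.trans h2)))
    · exact Or.inr (Fin.castSucc_injective k (finj (hxm'.symm.trans h2)))
  have hRR : ∀ j j' : Fin k, j ≠ j' → ∀ x, x ∈ (R j).support → x ∈ (R j').support →
      x = f (c j) ∨ x = f (c (j+1)) := by
    intro j j' hjj x hxj hxj'
    exact (hdisj (c j) (c (j+1)) _ (c j') (c (j'+1)) _ (hsne3 j j' hjj) x hxj hxj').1
  -- the tips of the spokes
  have hQlen : ∀ i, 0 < (Q i).length := by
    intro i
    rcases Nat.eq_zero_or_pos (Q i).length with h0 | h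
    · exact absurd (finj (SimpleGraph.Walk.eq_of_length_eq_zero h0)).symm
        (castSucc_ne_last i)
    · exact h
  set a : Fin k → V := fun i => (Q i).getVert 1 with hadef
  have hadj : ∀ i, H.Adj (f hub) (a i) := by
    intro i
    have := (Q i).adj_getVert_succ (i := 0) (hQlen i)
    simpa [SimpleGraph.Walk.getVert_zero] using this
  have hasupp : ∀ i, a i ∈ (Q i).support := by
    intro i
    rw [SimpleGraph.Walk.mem_support_iff_exists_getVert]
    exact ⟨1, rfl, hQlen i⟩
  have hane : ∀ i, a i ≠ f hub := fun i => (hadj i).ne'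
  have hadistinct : ∀ i j, a i = a j → i = j := by
    intro i j hij
    by_contra hne'
    exact hane i (hQQ i j hne' (a i) (hasupp i) (hij ▸ hasupp j))
  -- blocked spokes and blocked rim edges
  set Blocked : Fin k → Prop := fun i => ∃ x ∈ S', x ∈ (Q i).support with hBdef
  set Dprop : Fin k → Prop :=
    fun j => ∃ x ∈ S', x ∈ (R j).support ∧ ∀ m, x ∉ (Q m).support with hDpropdef
  set T1 : Finset (Fin k) := Finset.univ.filter (fun m => f (c m) ∈ S') with hT1def
  set T2 : Finset (Fin k) :=
    Finset.univ.filter (fun m => Blocked m ∧ f (c m) ∉ S') with hT2def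
  set D : Finset (Fin k) := Finset.univ.filter Dprop with hDdef
  have hT1mem : ∀ m : Fin k, m ∈ T1 ↔ f (c m) ∈ S' := by
    intro m; simp [hT1def]
  have hT2mem : ∀ m : Fin k, m ∈ T2 ↔ Blocked m ∧ f (c m) ∉ S' := by
    intro m; simp [hT2def]
  have hDmem : ∀ j : Fin k, j ∈ D ↔ Dprop j := by
    intro j; simp [hDdef]
  have hunblocked : ∀ i, i ∉ T1 → i ∉ T2 → ¬ Blocked i := by
    intro i h1 h2 hb
    by_cases hf : f (c i) ∈ S'
    · exact h1 ((hT1mem i).2 hf)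
    · exact h2 ((hT2mem i).2 ⟨hb, hf⟩)
  ----------------------------------------------------------------
  -- Step 3 : |T1| + |T2| + |D| ≤ 3
  ----------------------------------------------------------------
  have hcard3 : T1.card + T2.card + D.card ≤ 3 := by
    set xT2 : Fin k → V := fun m => if h : Blocked m then h.choose else v0 with hxT2def
    have hxT2 : ∀ m, Blocked m → xT2 m ∈ S' ∧ xT2 m ∈ (Q m).support := by
      intro m h
      simp only [hxT2def, dif_pos h]
      exact ⟨h.choose_spec.1, h.choose_spec.2⟩
    set xD : Fin k → V := fun j => if h : Dprop j then h.choose else v0 with hxDdef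
    have hxD : ∀ j, Dprop j →
        xD j ∈ S' ∧ xD j ∈ (R j).support ∧ ∀ m, xD j ∉ (Q m).support := by
      intro j h
      simp only [hxDdef, dif_pos h]
      exact ⟨h.choose_spec.1, h.choose_spec.2.1, h.choose_spec.2.2⟩
    set V1 : Finset V := T1.image (fun m => f (c m)) with hV1def
    set V2 : Finset V := T2.image xT2 with hV2def
    set V3 : Finset V := D.image xD with hV3def
    have hc1 : V1.card = T1.card := Finset.card_image_of_injOn
      (fun m _ m' _ h => Fin.castSucc_injective k (finj h))
    have hc2 : V2.card = T2.card := by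
      apply Finset.card_image_of_injOn
      intro m hm m' hm' heq
      by_contra hne'
      have h1 := hxT2 m ((hT2mem m).1 hm).1
      have h2 := hxT2 m' ((hT2mem m').1 hm').1
      exact hfhubS' (hQQ m m' hne' (xT2 m) h1.2 (heq ▸ h2.2) ▸ h1.1)
    have hc3 : V3.card = D.card := by
      apply Finset.card_image_of_injOn
      intro j hj j' hj' heq
      by_contra hne'
      have h1 := hxD j ((hDmem j).1 hj)
      have h2 := hxD j' ((hDmem j').1 hj')
      rcases hRR j j' hne' (xD j) h1.2.1 (by rw [heq]; exact h2.2.1) with hx | hx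
      · exact h1.2.2 j (by rw [hx]; exact SimpleGraph.Walk.end_mem_support (Q j))
      · exact h1.2.2 (j+1) (by rw [hx]; exact SimpleGraph.Walk.end_mem_support (Q (j+1)))
    have hd12 : Disjoint V1 V2 := by
      rw [Finset.disjoint_left]
      rintro x hx1 hx2
      obtain ⟨m, hm, rfl⟩ := Finset.mem_image.1 hx1
      obtain ⟨m', hm', heq⟩ := Finset.mem_image.1 hx2
      have h2 := hxT2 m' ((hT2mem m').1 hm').1
      by_cases hmm : m = m'
      · subst hmm
        exact ((hT2mem m).1 hm').2 ((hT1mem m).1 hm)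
      · have hthis := hQQ m' m (fun h => hmm h.symm) (xT2 m') h2.2
          (by rw [heq]; exact SimpleGraph.Walk.end_mem_support (Q m))
        exact hfhubS' (by rw [← hthis]; exact h2.1)
    have hd13 : Disjoint V1 V3 := by
      rw [Finset.disjoint_left]
      rintro x hx1 hx3
      obtain ⟨m, hm, rfl⟩ := Finset.mem_image.1 hx1
      obtain ⟨j, hj, heq⟩ := Finset.mem_image.1 hx3
      have h1 := hxD j ((hDmem j).1 hj)
      exact h1.2.2 m (by rw [heq]; exact SimpleGraph.Walk.end_mem_support (Q m))
    have hd23 : Disjoint V2 V3 := by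
      rw [Finset.disjoint_left]
      rintro x hx2 hx3
      obtain ⟨m, hm, rfl⟩ := Finset.mem_image.1 hx2
      obtain ⟨j, hj, heq⟩ := Finset.mem_image.1 hx3
      have h1 := hxD j ((hDmem j).1 hj)
      have h2 := hxT2 m ((hT2mem m).1 hm).1
      exact h1.2.2 m (heq ▸ h2.2)
    have hsubS' : V1 ∪ V2 ∪ V3 ⊆ (Set.toFinite S').toFinset := by
      intro x hx
      rw [Set.Finite.mem_toFinset]
      rcases Finset.mem_union.1 hx with hx | hx
      · rcases Finset.mem_union.1 hx with hx | hx
        · obtain ⟨m, hm, rfl⟩ := Finset.mem_image.1 hx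
          exact (hT1mem m).1 hm
        · obtain ⟨m, hm, rfl⟩ := Finset.mem_image.1 hx
          exact (hxT2 m ((hT2mem m).1 hm).1).1
      · obtain ⟨j, hj, rfl⟩ := Finset.mem_image.1 hx
        exact (hxD j ((hDmem j).1 hj)).1
    have hcardU : (V1 ∪ V2 ∪ V3).card = V1.card + V2.card + V3.card := by
      rw [Finset.card_union_of_disjoint (by
        rw [Finset.disjoint_union_left]; exact ⟨hd13, hd23⟩),
        Finset.card_union_of_disjoint hd12]
    have hle := Finset.card_le_card hsubS'
    rw [hcardU] at hle
    have : (Set.toFinite S').toFinset.card = 3 := by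
      rw [← Set.ncard_eq_toFinset_card _ (Set.toFinite S'), hS'card]
    omega
  ----------------------------------------------------------------
  -- Step 4 : connectivity relations
  ----------------------------------------------------------------
  have hfciS : ∀ i : Fin k, i ∉ T1 → f (c i) ∉ S := by
    intro i hi hmem
    by_cases h : f (c i) = v0
    · exact castSucc_ne_last i (finj (h.trans hv0f))
    · exact hi ((hT1mem i).2 ⟨hmem, h⟩)
  have hHsubG : ∀ {u w : V} (p : H.Walk u w), ∀ e ∈ p.edges, e ∈ G.edgeSet :=
    fun p e he => (SimpleGraph.edgeSet_subset_edgeSet.2 hHG) (p.edges_subset_edgeSet he)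
  have hgood : ∀ j : Fin k, j ∉ D → j ∉ T1 → j + 1 ∉ T1 →
      Conn G S (f (c j)) (f (c (j+1))) := by
    intro j hD hT1a hT1b
    have hfree : ∀ z ∈ (R j).support, z ∉ S := by
      intro z hz hzS
      by_cases hzv : z = v0
      · have hzr : z ∈ Set.range f := ⟨hub, by rw [← hv0f, hzv]⟩
        rcases hinter (c j) (c (j+1)) _ z hz hzr with h | h
        · exact castSucc_ne_last j (finj ((h.symm.trans hzv).trans hv0f))
        · exact castSucc_ne_last (j+1) (finj ((h.symm.trans hzv).trans hv0f))
      · have hzS' : z ∈ S' := ⟨hzS, hzv⟩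
        by_cases hsp : ∃ m, z ∈ (Q m).support
        · obtain ⟨m, hm⟩ := hsp
          have hz' := hQR m j z hm hz (fun h => hzv (by rw [h, ← hv0f]))
          obtain ⟨hzf, hmj⟩ := hz'
          have hfm : f (c m) ∈ S' := by rw [← hzf]; exact hzS'
          rcases hmj with h | h
          · exact hT1a ((hT1mem j).2 (by rw [← h]; exact hfm))
          · exact hT1b ((hT1mem (j+1)).2 (by rw [← h]; exact hfm))
        · push_neg at hsp
          exact hD ((hDmem j).2 ⟨z, hzS', hz, hsp⟩)
    refine ⟨(R j).transfer G (hHsubG (R j)), ?_⟩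
    intro z hz
    rw [SimpleGraph.Walk.support_transfer] at hz
    exact hfree z hz
  have htip : ∀ i : Fin k, ¬ Blocked i → Conn G S (a i) (f (c i)) ∧ a i ∉ S := by
    intro i hB
    set W := (Q i).dropUntil (a i) (hasupp i) with hWdef
    have hWsub : ∀ z ∈ W.support, z ∈ (Q i).support :=
      fun z hz => (Q i).support_dropUntil_subset (hasupp i) hz
    have hv0notW : v0 ∉ W.support := by
      intro hv0W
      have hnodup := (hQpath i).support_nodup
      have hspec : (Q i).support =
          ((Q i).takeUntil (a i) (hasupp i)).support ++ W.support.tail := by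
        conv_lhs => rw [← (Q i).take_spec (hasupp i)]
        rw [SimpleGraph.Walk.support_append]
      rw [hspec] at hnodup
      have hdisj' := List.disjoint_of_nodup_append hnodup
      have hstart : v0 ∈ ((Q i).takeUntil (a i) (hasupp i)).support := by
        rw [hv0f]; exact SimpleGraph.Walk.start_mem_support _
      have htail : v0 ∈ W.support.tail := by
        have hcons : W.support = a i :: W.support.tail :=
          SimpleGraph.Walk.support_eq_cons W
        rw [hcons] at hv0W
        rcases List.mem_cons.1 hv0W with h | h
        · exact absurd (h.symm.trans hv0f) (hane i)
        · exact h
      exact hdisj' hstart htail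
    have hWfree : ∀ z ∈ W.support, z ∉ S := by
      intro z hz hzS
      by_cases hzv : z = v0
      · exact hv0notW (hzv ▸ hz)
      · exact hB ⟨z, ⟨hzS, hzv⟩, hWsub z hz⟩
    refine ⟨⟨W.transfer G (hHsubG W), ?_⟩, ?_⟩
    · intro z hz
      rw [SimpleGraph.Walk.support_transfer] at hz
      exact hWfree z hz
    · exact fun h => hWfree (a i) (SimpleGraph.Walk.start_mem_support W) h
  have hrefl : ∀ i : Fin k, i ∉ T1 → Conn G S (f (c i)) (f (c i)) :=
    fun i hi => Conn.refl (hfciS i hi)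
  have hpairwise : ∀ i j : Fin k, i ∉ T1 → i ∉ T2 → j ∉ T1 → j ∉ T2 → i ≠ j →
      ¬ Conn G S (f (c i)) (f (c j)) := by
    intro i j hi1 hi2 hj1 hj2 hij hconn
    obtain ⟨hci', haiS⟩ := htip i (hunblocked i hi1 hi2)
    obtain ⟨hcj', hajS⟩ := htip j (hunblocked j hj1 hj2)
    have hchain : Conn G S (a i) (a j) := (hci'.trans hconn).trans hcj'.symm
    have hne' : a i ≠ a j := fun h => hij (hadistinct i j h)
    have hGi : G.Adj v0 (a i) := hHG (by rw [hv0f]; exact hadj i)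
    have hGj : G.Adj v0 (a j) := hHG (by rw [hv0f]; exact hadj j)
    exact bridge_contra hnbr hGi hGj hne' haiS hajS hchain
  exact cyc hk (fun i j => Conn G S (f (c i)) (f (c j)))
    (fun _ _ h => h.symm) (fun _ _ _ h h' => h.trans h') T1 T2 D
    hrefl hcard3 hgood hpairwise
end
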